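/- arXiv:2203.17183 — 8 statements merged into one kernel-verified Lean document; each statement's English description precedes it below -/
import Mathlib

section
/- Let v be an admissible potential with range R₀, let (a,u) be an even-wave scattering solution for v, and let R > R₀. Then for every continuously differentiable function f : ℝ → ℝ with f(−R) = f(R) = 1, one has ∫_{−R}^{R} ( 2·f'(x)² + v(x)·f(x)² ) dx ≥ 4/(R − a). Moreover, equality holds for the scattering trial function f₀(x) := u(x)/(R − a), i.e. ∫_{−R}^{R} ( 2·f₀'(x)² + v(x)·f₀(x)² ) dx = 4/(R − a). -/
open MeasureTheory Real

noncomputable section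

/-- An admissible potential with range `R₀`. -/
structure AdmissiblePotential (v : ℝ → ℝ) (R₀ : ℝ) : Prop where
  range_pos : 0 < R₀
  cont : Continuous v
  nonneg : ∀ x, 0 ≤ v x
  even : ∀ x, v (-x) = v x
  vanish : ∀ x, R₀ < |x| → v x = 0

/-- An even-wave scattering solution `(a, u)` for the potential `v`. -/
structure EvenScatteringSolution (v : ℝ → ℝ) (R₀ : ℝ) (a : ℝ) (u : ℝ → ℝ) : Prop where
  smooth : ContDiff ℝ 2 u
  even : ∀ x, u (-x) = u x
  pos : ∀ x, 0 < u x
  ode : ∀ x, deriv (deriv u) x = (1 / 2) * v x * u x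
  linear : ∀ x, R₀ ≤ x → u x = x - a

theorem statement_4 (v : ℝ → ℝ) (R₀ a : ℝ) (u : ℝ → ℝ)
    (hv : AdmissiblePotential v R₀) (hu : EvenScatteringSolution v R₀ a u)
    (R : ℝ) (hR : R₀ < R) :
    (∀ f : ℝ → ℝ, ContDiff ℝ 1 f → f (-R) = 1 → f R = 1 →
      4 / (R - a) ≤ ∫ x in Set.Icc (-R) R, (2 * (deriv f x) ^ 2 + v x * (f x) ^ 2)) ∧
    (∫ x in Set.Icc (-R) R,
        (2 * (deriv (fun y => u y / (R - a)) x) ^ 2 + v x * (u x / (R - a)) ^ 2)) =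
      4 / (R - a) := by
  have haR₀ : a < R₀ := by
    have hp := hu.pos R₀
    rw [hu.linear R₀ le_rfl] at hp; linarith
  have hc : 0 < R - a := by linarith
  have hne : R - a ≠ 0 := ne_of_gt hc
  have hRR : -R ≤ R := by have := hv.range_pos; linarith
  have hudiff : Differentiable ℝ u := hu.smooth.differentiable (by norm_num)
  have hucont : Continuous u := hudiff.continuous
  have hw1 : ContDiff ℝ 1 (deriv u) := by
    have h2 : ContDiff ℝ ((1:ℕ∞)+1) u := by have h := hu.smooth; norm_num at h ⊢; exact h
    exact (contDiff_succ_iff_deriv.mp h2).2.2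
  have hwdiff : Differentiable ℝ (deriv u) := hw1.differentiable one_ne_zero
  have hwcont : Continuous (deriv u) := hwdiff.continuous
  have huR : u R = R - a := hu.linear R hR.le
  have humR : u (-R) = R - a := by rw [hu.even, huR]
  have hwR : deriv u R = 1 := by
    have hev : (fun x => x - a) =ᶠ[nhds R] u := by
      filter_upwards [Ioi_mem_nhds hR] with x hx
      exact (hu.linear x (le_of_lt hx)).symm
    rw [← hev.deriv_eq]
    simpa using ((hasDerivAt_id R).sub_const a).deriv
  have hwodd : ∀ x, deriv u (-x) = - deriv u x := by
    intro x
    have h1 : HasDerivAt (u ∘ fun y => -y) (deriv u (-x) * (-1)) x :=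
      HasDerivAt.comp x ((hudiff (-x)).hasDerivAt) (hasDerivAt_neg x)
    have h2 : u ∘ (fun y => -y) = u := funext fun y => hu.even y
    rw [h2] at h1
    have h3 := h1.deriv
    linarith
  have hwmR : deriv u (-R) = -1 := by rw [hwodd, hwR]
  have hwha : ∀ x, HasDerivAt (deriv u) (1/2 * v x * u x) x := by
    intro x
    have h := (hwdiff x).hasDerivAt
    rwa [hu.ode x] at h
  have hmaincont : Continuous (fun x => 2 * (deriv u x)^2 + v x * (u x)^2) :=
    (continuous_const.mul (hwcont.pow 2)).add (hv.cont.mul (hucont.pow 2))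
  have hmain : ∫ x in (-R)..R, (2 * (deriv u x)^2 + v x * (u x)^2) = 4 * (R - a) := by
    have hF : ∀ x ∈ Set.uIcc (-R) R, HasDerivAt (fun y => 2 * (u y * deriv u y))
        (2 * (deriv u x)^2 + v x * (u x)^2) x := by
      intro x _
      have h := (((hudiff x).hasDerivAt).mul (hwha x)).const_mul 2
      exact h.congr_deriv (by ring)
    rw [intervalIntegral.integral_eq_sub_of_hasDerivAt hF (hmaincont.intervalIntegrable _ _)]
    rw [huR, humR, hwR, hwmR]; ring
  have hIcc : ∀ G : ℝ → ℝ, ∫ x in Set.Icc (-R) R, G x = ∫ x in (-R)..R, G x := by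
    intro G
    rw [MeasureTheory.integral_Icc_eq_integral_Ioc, intervalIntegral.integral_of_le hRR]
  constructor
  · intro f hf hfm hfp
    have hfdiff : Differentiable ℝ f := hf.differentiable one_ne_zero
    have hfdcont : Continuous (deriv f) := hf.continuous_deriv le_rfl
    set g : ℝ → ℝ := fun x => f x - u x / (R - a) with hg_def
    have hgcont : Continuous g := hfdiff.continuous.sub (hucont.div_const _)
    have hgR : g R = 0 := by simp only [hg_def]; rw [hfp, huR]; field_simp; norm_num
    have hgmR : g (-R) = 0 := by simp only [hg_def]; rw [hfm, humR]; field_simp; norm_num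
    have hgd : ∀ x, HasDerivAt g (deriv f x - deriv u x / (R - a)) x := fun x =>
      ((hfdiff x).hasDerivAt).sub (((hudiff x).hasDerivAt).div_const (R - a))
    have hgdcont : Continuous (fun x => deriv f x - deriv u x / (R - a)) :=
      hfdcont.sub (hwcont.div_const _)
    have hcross : ∫ x in (-R)..R,
        (2 * (deriv f x - deriv u x / (R - a)) * deriv u x + v x * g x * u x) = 0 := by
      have hF : ∀ x ∈ Set.uIcc (-R) R, HasDerivAt (fun y => 2 * (g y * deriv u y))
          (2 * (deriv f x - deriv u x / (R - a)) * deriv u x + v x * g x * u x) x := by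
        intro x _
        have h := ((hgd x).mul (hwha x)).const_mul 2
        exact h.congr_deriv (by ring)
      have hcontc : Continuous (fun x =>
          2 * (deriv f x - deriv u x / (R - a)) * deriv u x + v x * g x * u x) :=
        ((continuous_const.mul hgdcont).mul hwcont).add ((hv.cont.mul hgcont).mul hucont)
      rw [intervalIntegral.integral_eq_sub_of_hasDerivAt hF (hcontc.intervalIntegrable _ _)]
      rw [hgR, hgmR]; ring
    have hdecomp : ∀ x, 2 * (deriv f x)^2 + v x * (f x)^2
        = (2 * (deriv f x - deriv u x / (R - a))^2 + v x * (g x)^2)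
          + ((2/(R - a)) * (2 * (deriv f x - deriv u x / (R - a)) * deriv u x + v x * g x * u x)
          + (1/(R - a)^2) * (2 * (deriv u x)^2 + v x * (u x)^2)) := by
      intro x
      simp only [hg_def]
      field_simp
      ring
    have hI1 : IntervalIntegrable
        (fun x => 2 * (deriv f x - deriv u x / (R - a))^2 + v x * (g x)^2) volume (-R) R :=
      ((continuous_const.mul (hgdcont.pow 2)).add (hv.cont.mul (hgcont.pow 2))).intervalIntegrable _ _
    have hI2 : IntervalIntegrable (fun x =>
        (2/(R - a)) * (2 * (deriv f x - deriv u x / (R - a)) * deriv u x + v x * g x * u x)) volume (-R) R :=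
      (continuous_const.mul (((continuous_const.mul hgdcont).mul hwcont).add
        ((hv.cont.mul hgcont).mul hucont))).intervalIntegrable _ _
    have hI3 : IntervalIntegrable (fun x =>
        (1/(R - a)^2) * (2 * (deriv u x)^2 + v x * (u x)^2)) volume (-R) R :=
      (continuous_const.mul hmaincont).intervalIntegrable _ _
    have hsplit : ∫ x in (-R)..R, (2 * (deriv f x)^2 + v x * (f x)^2)
        = (∫ x in (-R)..R, (2 * (deriv f x - deriv u x / (R - a))^2 + v x * (g x)^2))
          + ((2/(R - a)) * ∫ x in (-R)..R,
              (2 * (deriv f x - deriv u x / (R - a)) * deriv u x + v x * g x * u x))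
          + ((1/(R - a)^2) * ∫ x in (-R)..R, (2 * (deriv u x)^2 + v x * (u x)^2)) := by
      rw [show (fun x => 2 * (deriv f x)^2 + v x * (f x)^2) = fun x =>
          (2 * (deriv f x - deriv u x / (R - a))^2 + v x * (g x)^2)
          + ((2/(R - a)) * (2 * (deriv f x - deriv u x / (R - a)) * deriv u x + v x * g x * u x)
          + (1/(R - a)^2) * (2 * (deriv u x)^2 + v x * (u x)^2)) from funext hdecomp]
      rw [intervalIntegral.integral_add hI1 (hI2.add hI3),
        intervalIntegral.integral_add hI2 hI3,
        intervalIntegral.integral_const_mul, intervalIntegral.integral_const_mul]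
      ring
    have hpos : 0 ≤ ∫ x in (-R)..R, (2 * (deriv f x - deriv u x / (R - a))^2 + v x * (g x)^2) :=
      intervalIntegral.integral_nonneg hRR fun x _ =>
        add_nonneg (by positivity) (mul_nonneg (hv.nonneg x) (sq_nonneg _))
    have hval : (1/(R - a)^2) * (4 * (R - a)) = 4 / (R - a) := by field_simp
    rw [hIcc, hsplit, hcross, hmain]
    linarith
  · rw [hIcc]
    have hder : ∀ x, deriv (fun y => u y / (R - a)) x = deriv u x / (R - a) := fun x =>
      (((hudiff x).hasDerivAt).div_const (R - a)).deriv
    rw [show (fun x => 2 * (deriv (fun y => u y / (R - a)) x)^2 + v x * (u x / (R - a))^2)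
        = fun x => (1/(R - a)^2) * (2 * (deriv u x)^2 + v x * (u x)^2) from
      funext fun x => by rw [hder]; field_simp]
    rw [intervalIntegral.integral_const_mul, hmain]
    field_simp
end
end

section
/- (Dyson's lemma.) Let v be an admissible potential with range R₀, let (a,u) be an even-wave scattering solution for v, and let R > R₀. Then for all s ≥ R, t ≥ R and every continuously differentiable function φ : ℝ → ℝ, one has ∫_{−s}^{t} ( φ'(x)² + (1/2)·v(x)·φ(x)² ) dx ≥ (1/(R − a))·( φ(R)² + φ(−R)² ). -/
open MeasureTheory Real

noncomputable section

/-- Dyson's lemma in one dimension. -/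
theorem statement_5 (v : ℝ → ℝ) (R₀ a : ℝ) (u : ℝ → ℝ)
    (hv : AdmissiblePotential v R₀) (hu : EvenScatteringSolution v R₀ a u)
    (R : ℝ) (hR : R₀ < R) :
    ∀ s t : ℝ, R ≤ s → R ≤ t → ∀ φ : ℝ → ℝ, ContDiff ℝ 1 φ →
      (1 / (R - a)) * ((φ R) ^ 2 + (φ (-R)) ^ 2) ≤
        ∫ x in Set.Icc (-s) t, ((deriv φ x) ^ 2 + (1 / 2) * v x * (φ x) ^ 2) := by
  intro s t hs ht φ hφ
  -- basic facts
  have hud : Differentiable ℝ u := hu.smooth.differentiable (by norm_num)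
  have hu1 : ContDiff ℝ 1 (deriv u) := by
    have := (contDiff_succ_iff_deriv (n := 1)).mp hu.smooth
    exact this.2.2
  have hu'd : Differentiable ℝ (deriv u) := hu1.differentiable one_ne_zero
  have hφd : Differentiable ℝ φ := hφ.differentiable one_ne_zero
  have hφ'c : Continuous (deriv φ) := (contDiff_one_iff_deriv.mp hφ).2
  have hune : ∀ x, u x ≠ 0 := fun x => (hu.pos x).ne'
  -- boundary values
  have huR : u R = R - a := hu.linear R hR.le
  have hRa : 0 < R - a := huR ▸ hu.pos R
  have hduR : deriv u R = 1 := by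
    have hev : u =ᶠ[nhds R] (fun x => x - a) :=
      Filter.eventually_of_mem (isOpen_Ioi.mem_nhds hR)
        (fun x hx => hu.linear x (le_of_lt hx))
    rw [hev.deriv_eq]
    simp
  have hodd : ∀ x : ℝ, deriv u (-x) = -deriv u x := by
    intro x
    have h1 : HasDerivAt (fun y => u (-y)) (deriv u (-x) * (-1)) x :=
      ((hud (-x)).hasDerivAt).comp x (hasDerivAt_neg x)
    have h2 : (fun y : ℝ => u (-y)) = u := funext hu.even
    rw [h2] at h1
    have := h1.deriv
    linarith
  have huNR : u (-R) = R - a := by rw [hu.even R, huR]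
  have hduNR : deriv u (-R) = -1 := by rw [hodd R, hduR]
  -- the comparison function
  set g : ℝ → ℝ := fun x => φ x ^ 2 * deriv u x / u x with hg_def
  set G : ℝ → ℝ := fun x =>
    ((2 * φ x * deriv φ x * deriv u x + φ x ^ 2 * (1 / 2 * v x * u x)) * u x
      - φ x ^ 2 * deriv u x * deriv u x) / u x ^ 2 with hG_def
  have hg : ∀ x : ℝ, HasDerivAt g (G x) x := by
    intro x
    have h1 : HasDerivAt (fun y => φ y ^ 2) (2 * φ x * deriv φ x) x := by
      have := ((hφd x).hasDerivAt).pow 2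
      simpa [Pi.pow_def, mul_comm, mul_assoc, mul_left_comm] using this
    have h2 : HasDerivAt (deriv u) (1 / 2 * v x * u x) x := by
      have := (hu'd x).hasDerivAt
      rwa [hu.ode x] at this
    have h3 : HasDerivAt (fun y => φ y ^ 2 * deriv u y)
        (2 * φ x * deriv φ x * deriv u x + φ x ^ 2 * (1 / 2 * v x * u x)) x := h1.mul h2
    have h4 := h3.div ((hud x).hasDerivAt) (hune x)
    simpa [Pi.div_def, hg_def, hG_def] using h4
  -- pointwise inequality
  have hpt : ∀ x : ℝ, G x ≤ deriv φ x ^ 2 + 1 / 2 * v x * φ x ^ 2 := by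
    intro x
    have key : deriv φ x ^ 2 + 1 / 2 * v x * φ x ^ 2 - G x
        = (deriv φ x - φ x * deriv u x / u x) ^ 2 := by
      have hx := hune x
      rw [hG_def]
      field_simp
      ring
    nlinarith [sq_nonneg (deriv φ x - φ x * deriv u x / u x)]
  -- continuity / integrability
  have hφc : Continuous φ := hφd.continuous
  have huc : Continuous u := hud.continuous
  have hu'c : Continuous (deriv u) := hu1.continuous
  have hvc : Continuous v := hv.cont
  have hf_cont : Continuous (fun x => deriv φ x ^ 2 + 1 / 2 * v x * φ x ^ 2) :=
    (hφ'c.pow 2).add ((continuous_const.mul hvc).mul (hφc.pow 2))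
  have hG_cont : Continuous G := by
    rw [hG_def]
    apply Continuous.div
    · exact ((((continuous_const.mul hφc).mul hφ'c).mul hu'c).add
        ((hφc.pow 2).mul ((continuous_const.mul hvc).mul huc))).mul huc |>.sub
        (((hφc.pow 2).mul hu'c).mul hu'c)
    · exact huc.pow 2
    · intro x; exact pow_ne_zero 2 (hune x)
  have hf_nonneg : ∀ x : ℝ, 0 ≤ deriv φ x ^ 2 + 1 / 2 * v x * φ x ^ 2 := by
    intro x
    have := hv.nonneg x
    positivity
  have hRR : (-R : ℝ) ≤ R := by linarith [hv.range_pos, hR]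
  -- FTC for G
  have hftc : ∫ x in (-R)..R, G x = g R - g (-R) :=
    intervalIntegral.integral_eq_sub_of_hasDerivAt (fun x _ => hg x)
      (hG_cont.intervalIntegrable _ _)
  have hmono : ∫ x in (-R)..R, G x
      ≤ ∫ x in (-R)..R, (deriv φ x ^ 2 + 1 / 2 * v x * φ x ^ 2) :=
    intervalIntegral.integral_mono_on hRR (hG_cont.intervalIntegrable _ _)
      (hf_cont.intervalIntegrable _ _) (fun x _ => hpt x)
  have hval : g R - g (-R) = 1 / (R - a) * (φ R ^ 2 + φ (-R) ^ 2) := by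
    rw [hg_def]
    simp only [huR, huNR, hduR, hduNR]
    field_simp
    ring
  -- convert and enlarge domain
  have hsub : Set.Icc (-R) R ⊆ Set.Icc (-s) t :=
    Set.Icc_subset_Icc (by linarith) (by linarith)
  have hInt : IntegrableOn (fun x => deriv φ x ^ 2 + 1 / 2 * v x * φ x ^ 2)
      (Set.Icc (-s) t) := hf_cont.integrableOn_Icc
  have hbig : ∫ x in Set.Icc (-R) R, (deriv φ x ^ 2 + 1 / 2 * v x * φ x ^ 2)
      ≤ ∫ x in Set.Icc (-s) t, (deriv φ x ^ 2 + 1 / 2 * v x * φ x ^ 2) := by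
    apply setIntegral_mono_set hInt
    · exact Filter.Eventually.of_forall hf_nonneg
    · exact Filter.Eventually.of_forall hsub
  have heq : ∫ x in (-R)..R, (deriv φ x ^ 2 + 1 / 2 * v x * φ x ^ 2)
      = ∫ x in Set.Icc (-R) R, (deriv φ x ^ 2 + 1 / 2 * v x * φ x ^ 2) := by
    rw [intervalIntegral.integral_of_le hRR, integral_Icc_eq_integral_Ioc]
  calc 1 / (R - a) * (φ R ^ 2 + φ (-R) ^ 2) = g R - g (-R) := hval.symm
    _ = ∫ x in (-R)..R, G x := hftc.symm
    _ ≤ ∫ x in (-R)..R, (deriv φ x ^ 2 + 1 / 2 * v x * φ x ^ 2) := hmono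
    _ = ∫ x in Set.Icc (-R) R, (deriv φ x ^ 2 + 1 / 2 * v x * φ x ^ 2) := heq
    _ ≤ _ := hbig
end
end

section
/- Let γ > 0 and λ > 0, and let g : ℝ → ℝ be continuous and nonnegative on [−1,1], satisfying the Lieb–Liniger integral equation 2π·g(y) = 1 + 2λ·∫_{−1}^{1} g(x)/(λ² + (x − y)²) dx for all y ∈ [−1,1], together with the constraint λ = γ·∫_{−1}^{1} g(x) dx. Define e := (γ³/λ³)·∫_{−1}^{1} g(x)·x² dx. Then e ≥ (π²/3)·(γ/(γ+2))², and consequently e ≥ (π²/3)·(1 − 4/γ). -/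
open MeasureTheory Real

/-- Lower bound on the Lieb--Liniger thermodynamic energy density. -/
theorem statement_6 (γ lam : ℝ) (hγ : 0 < γ) (hlam : 0 < lam) (g : ℝ → ℝ)
    (hg_cont : ContinuousOn g (Set.Icc (-1) 1))
    (hg_nonneg : ∀ x ∈ Set.Icc (-1 : ℝ) 1, 0 ≤ g x)
    (heq : ∀ y ∈ Set.Icc (-1 : ℝ) 1,
      2 * π * g y = 1 + 2 * lam * ∫ x in Set.Icc (-1 : ℝ) 1, g x / (lam ^ 2 + (x - y) ^ 2))
    (hconstraint : lam = γ * ∫ x in Set.Icc (-1 : ℝ) 1, g x) :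
    (π ^ 2 / 3) * (γ / (γ + 2)) ^ 2 ≤
        (γ ^ 3 / lam ^ 3) * ∫ x in Set.Icc (-1 : ℝ) 1, g x * x ^ 2 ∧
      (π ^ 2 / 3) * (1 - 4 / γ) ≤
        (γ ^ 3 / lam ^ 3) * ∫ x in Set.Icc (-1 : ℝ) 1, g x * x ^ 2 := by
  have hπ : (0:ℝ) < π := Real.pi_pos
  set S : ℝ := ∫ x in Set.Icc (-1 : ℝ) 1, g x with hSdef
  have hS : S = lam / γ := by field_simp [hconstraint]; linarith [hconstraint]
  set M : ℝ := (γ + 2) / (2 * π * γ) with hMdef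
  have hM : 0 < M := by positivity
  set a : ℝ := π * lam / (γ + 2) with hadef
  have ha : 0 < a := by positivity
  have hSaM : S = 2 * a * M := by
    rw [hS, hadef, hMdef]; field_simp
  -- integrability of g on Icc
  have hgInt : IntegrableOn g (Set.Icc (-1 : ℝ) 1) := hg_cont.integrableOn_compact isCompact_Icc
  -- g ≤ M on Icc
  have hgM : ∀ y ∈ Set.Icc (-1 : ℝ) 1, g y ≤ M := by
    intro y hy
    have hker : (∫ x in Set.Icc (-1 : ℝ) 1, g x / (lam ^ 2 + (x - y) ^ 2)) ≤
        (∫ x in Set.Icc (-1 : ℝ) 1, g x / lam ^ 2) := by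
      apply setIntegral_mono_on
      · apply ContinuousOn.integrableOn_compact isCompact_Icc
        apply hg_cont.div (by fun_prop)
        intro x hx
        positivity
      · exact (hg_cont.div_const _).integrableOn_compact isCompact_Icc
      · exact measurableSet_Icc
      · intro x hx
        apply div_le_div_of_nonneg_left (hg_nonneg x hx) (by positivity)
        nlinarith [sq_nonneg (x - y)]
    have h2 : (∫ x in Set.Icc (-1 : ℝ) 1, g x / lam ^ 2) = S / lam ^ 2 := by
      rw [hSdef, ← integral_div]
    have h3 := heq y hy
    have hlam2 : (0:ℝ) < lam ^ 2 := by positivity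
    have h4 : 2 * π * g y ≤ 1 + 2 * lam * (S / lam ^ 2) := by
      rw [h3]
      nlinarith [hker, h2]
    rw [hS] at h4
    have h5 : 2 * lam * (lam / γ / lam ^ 2) = 2 / γ := by
      field_simp
    rw [h5] at h4
    rw [hMdef, le_div_iff₀ (by positivity)]
    have hg2 : γ * (2 / γ) = 2 := by field_simp
    nlinarith [mul_le_mul_of_nonneg_left h4 hγ.le]
  -- a ≤ 1
  have ha1 : a ≤ 1 := by
    have hSle : S ≤ 2 * M := by
      have : S ≤ ∫ _x in Set.Icc (-1 : ℝ) 1, M := by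
        exact setIntegral_mono_on hgInt (integrableOn_const (by
          rw [Real.volume_Icc]; exact ENNReal.ofReal_ne_top)) measurableSet_Icc hgM
      rwa [setIntegral_const, measureReal_def, Real.volume_Icc, ENNReal.toReal_ofReal (by norm_num),
        smul_eq_mul, show (1 : ℝ) - (-1) = 2 by norm_num] at this
    nlinarith [hSaM]
  have hsub : Set.Icc (-a) a ⊆ Set.Icc (-1 : ℝ) 1 :=
    Set.Icc_subset_Icc (by linarith) ha1
  have hcontsub : ContinuousOn g (Set.Icc (-a) a) := hg_cont.mono hsub
  have hInt1 : IntegrableOn (fun x => g x * (x ^ 2 - a ^ 2)) (Set.Icc (-1 : ℝ) 1) :=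
    (hg_cont.mul (by fun_prop)).integrableOn_compact isCompact_Icc
  have hdiff : 0 ≤ ∫ x in Set.Icc (-1 : ℝ) 1 \ Set.Icc (-a) a, g x * (x ^ 2 - a ^ 2) := by
    apply setIntegral_nonneg (measurableSet_Icc.diff measurableSet_Icc)
    intro x hx
    have h1 : x ∈ Set.Icc (-1 : ℝ) 1 := hx.1
    have h3 : a ^ 2 < x ^ 2 := by
      have hx2 : x ∉ Set.Icc (-a) a := hx.2
      rw [Set.mem_Icc] at hx2
      push_neg at hx2
      rcases le_or_gt (-a) x with h' | h'
      · have := hx2 h'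
        nlinarith
      · nlinarith
    have := hg_nonneg x h1
    nlinarith
  have hinner : (∫ x in Set.Icc (-a) a, (M * (x ^ 2 - a ^ 2))) ≤
      ∫ x in Set.Icc (-a) a, g x * (x ^ 2 - a ^ 2) := by
    apply setIntegral_mono_on
    · exact (continuousOn_const.mul (by fun_prop)).integrableOn_compact isCompact_Icc
    · exact (hcontsub.mul (by fun_prop)).integrableOn_compact isCompact_Icc
    · exact measurableSet_Icc
    · intro x hx
      have hxI := hsub hx
      have h1 : g x ≤ M := hgM x hxI
      have h2 : 0 ≤ g x := hg_nonneg x hxI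
      have h3 : x ^ 2 - a ^ 2 ≤ 0 := by
        rw [Set.mem_Icc] at hx
        nlinarith [hx.1, hx.2]
      nlinarith
  have hinnerval : (∫ x in Set.Icc (-a) a, (M * (x ^ 2 - a ^ 2))) = -(4 / 3) * M * a ^ 3 := by
    rw [MeasureTheory.integral_Icc_eq_integral_Ioc,
      ← intervalIntegral.integral_of_le (by linarith : (-a) ≤ a),
      intervalIntegral.integral_const_mul,
      intervalIntegral.integral_sub (intervalIntegral.intervalIntegrable_pow 2)
        intervalIntegrable_const,
      integral_pow, intervalIntegral.integral_const, smul_eq_mul]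
    push_cast
    ring
  have hsplit : (∫ x in Set.Icc (-1 : ℝ) 1, g x * (x ^ 2 - a ^ 2)) =
      (∫ x in Set.Icc (-1 : ℝ) 1 \ Set.Icc (-a) a, g x * (x ^ 2 - a ^ 2)) +
      (∫ x in Set.Icc (-a) a, g x * (x ^ 2 - a ^ 2)) := by
    rw [integral_diff measurableSet_Icc hInt1 hsub]
    ring
  have hkey : -(4 / 3) * M * a ^ 3 ≤ ∫ x in Set.Icc (-1 : ℝ) 1, g x * (x ^ 2 - a ^ 2) := by
    rw [hsplit]
    linarith [hinner, hinnerval, hdiff]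
  have hexp : (∫ x in Set.Icc (-1 : ℝ) 1, g x * x ^ 2) =
      (∫ x in Set.Icc (-1 : ℝ) 1, g x * (x ^ 2 - a ^ 2)) + a ^ 2 * S := by
    have h1 : (∫ x in Set.Icc (-1 : ℝ) 1, g x * x ^ 2) =
        ∫ x in Set.Icc (-1 : ℝ) 1, (g x * (x ^ 2 - a ^ 2) + a ^ 2 * g x) := by
      apply setIntegral_congr_fun measurableSet_Icc
      intro x _
      ring
    rw [h1, integral_add hInt1 (hgInt.const_mul _), hSdef, integral_const_mul]
  have hmain : π ^ 2 / 3 * (γ / (γ + 2)) ^ 2 ≤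
      (γ ^ 3 / lam ^ 3) * ∫ x in Set.Icc (-1 : ℝ) 1, g x * x ^ 2 := by
    have hlow : (2 / 3) * M * a ^ 3 ≤ ∫ x in Set.Icc (-1 : ℝ) 1, g x * x ^ 2 := by
      rw [hexp]
      nlinarith [hkey, hSaM]
    have hval : (γ ^ 3 / lam ^ 3) * ((2 / 3) * M * a ^ 3) = π ^ 2 / 3 * (γ / (γ + 2)) ^ 2 := by
      rw [hMdef, hadef]
      field_simp
    calc π ^ 2 / 3 * (γ / (γ + 2)) ^ 2 = (γ ^ 3 / lam ^ 3) * ((2 / 3) * M * a ^ 3) := hval.symm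
      _ ≤ _ := mul_le_mul_of_nonneg_left hlow (by positivity)
  refine ⟨hmain, le_trans ?_ hmain⟩
  apply mul_le_mul_of_nonneg_left _ (by positivity)
  have hq : (0:ℝ) < γ + 2 := by linarith
  rw [div_pow, le_div_iff₀ (by positivity), sub_mul, ← sub_nonneg]
  have hid : γ ^ 2 - ((1 : ℝ) * (γ + 2) ^ 2 - 4 / γ * (γ + 2) ^ 2) = (12 * γ + 16) / γ := by
    field_simp
    ring
  rw [hid]
  positivity
end

section
/- (Bathtub-type lower bound.) Let K > 0 and let g : ℝ → ℝ be measurable with 0 ≤ g(x) ≤ K for almost every x. Assume g and x ↦ x²·g(x) are Lebesgue integrable and set M := ∫_ℝ g(x) dx. Then ∫_ℝ g(x)·x² dx ≥ M³/(12·K²). -/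
open MeasureTheory Real

/-- Bathtub-type lower bound: if `0 ≤ g ≤ K` a.e. and `M = ∫ g`, then
`∫ g(x) x² dx ≥ M³ / (12 K²)`. -/
theorem statement_7 (K : ℝ) (hK : 0 < K) (g : ℝ → ℝ) (hmeas : Measurable g)
    (hbd : ∀ᵐ x : ℝ, 0 ≤ g x ∧ g x ≤ K)
    (hint : Integrable g) (hint2 : Integrable (fun x => x ^ 2 * g x)) :
    (∫ x : ℝ, g x) ^ 3 / (12 * K ^ 2) ≤ ∫ x : ℝ, g x * x ^ 2 := by
  set M := ∫ x : ℝ, g x with hMdef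
  have hM0 : 0 ≤ M := integral_nonneg_of_ae (hbd.mono fun x hx => hx.1)
  set r : ℝ := M / (2 * K) with hrdef
  have hr0 : 0 ≤ r := div_nonneg hM0 (by positivity)
  set s : Set ℝ := Set.Icc (-r) r with hsdef
  have hs : MeasurableSet s := measurableSet_Icc
  have hvol : volume s = ENNReal.ofReal (2 * r) := by
    rw [hsdef, Real.volume_Icc]; ring_nf
  have hvolne : volume s ≠ ⊤ := by rw [hvol]; exact ENNReal.ofReal_ne_top
  -- integrability facts
  have hgx2 : Integrable (fun x => g x * x ^ 2) := by
    simpa [mul_comm] using hint2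
  have hKx2 : Integrable (s.indicator fun x : ℝ => K * x ^ 2) :=
    ((continuous_const.mul (continuous_pow 2)).integrableOn_Icc).integrable_indicator hs
  have hKind : Integrable (s.indicator fun _ : ℝ => K) :=
    (integrableOn_const hvolne).integrable_indicator hs
  -- values of the indicator integrals
  have hIK : ∫ x : ℝ, s.indicator (fun _ : ℝ => K) x = 2 * r * K := by
    rw [integral_indicator hs, setIntegral_const, measureReal_def, hvol,
      ENNReal.toReal_ofReal (by positivity), smul_eq_mul]
  have hIK2 : ∫ x : ℝ, s.indicator (fun x : ℝ => K * x ^ 2) x = K * (2 * r ^ 3 / 3) := by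
    rw [integral_indicator hs, hsdef, integral_Icc_eq_integral_Ioc,
      ← intervalIntegral.integral_of_le (by linarith : -r ≤ r)]
    rw [intervalIntegral.integral_const_mul, integral_pow]
    ring
  have h2rK : 2 * r * K = M := by
    rw [hrdef]; field_simp
  -- pointwise comparison
  have hae : ∀ᵐ x : ℝ,
      s.indicator (fun x : ℝ => K * x ^ 2) x
        + r ^ 2 * (g x - s.indicator (fun _ : ℝ => K) x) ≤ g x * x ^ 2 := by
    filter_upwards [hbd] with x hx
    obtain ⟨h0, h1⟩ := hx
    by_cases hxs : x ∈ s
    · rw [Set.indicator_of_mem hxs, Set.indicator_of_mem hxs]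
      obtain ⟨hx1, hx2⟩ := hxs
      have hxsq : x ^ 2 ≤ r ^ 2 := by nlinarith
      nlinarith [mul_nonneg (sub_nonneg.2 h1) (sub_nonneg.2 hxsq)]
    · rw [Set.indicator_of_notMem hxs, Set.indicator_of_notMem hxs]
      have hxsq : r ^ 2 ≤ x ^ 2 := by
        rcases le_or_gt x (-r) with h | h
        · nlinarith
        · have hr' : r < x := by
            by_contra hc; push_neg at hc
            exact hxs ⟨h.le, hc⟩
          nlinarith
      nlinarith
  -- integrate the comparison
  have hsub : Integrable (fun x : ℝ => r ^ 2 * (g x - s.indicator (fun _ : ℝ => K) x)) := by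
    exact ((hint.sub hKind).const_mul _)
  have hsub' : Integrable (fun x : ℝ => g x - s.indicator (fun _ : ℝ => K) x) := by
    exact hint.sub hKind
  have hlhs : Integrable (fun x : ℝ => s.indicator (fun x : ℝ => K * x ^ 2) x
      + r ^ 2 * (g x - s.indicator (fun _ : ℝ => K) x)) :=
    hKx2.add hsub
  have := integral_mono_ae hlhs hgx2 hae
  have hcalc : ∫ x : ℝ, (s.indicator (fun x : ℝ => K * x ^ 2) x
      + r ^ 2 * (g x - s.indicator (fun _ : ℝ => K) x)) = K * (2 * r ^ 3 / 3) := by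
    rw [integral_add hKx2 hsub, integral_const_mul, integral_sub hint hKind,
      hIK2, hIK, h2rK, ← hMdef]
    ring
  rw [hcalc] at this
  have hfinal : K * (2 * r ^ 3 / 3) = M ^ 3 / (12 * K ^ 2) := by
    rw [hrdef]; field_simp; ring
  linarith [this, hfinal.symm.le, hfinal.le]
end

section
/- (Sine Vandermonde identity / free Fermi ground state.) For every integer N ≥ 1 and all real numbers y₁, …, y_N, the determinant of the N×N matrix whose (i,j) entry is sin(j·y_i) (with i, j ranging over 1, …, N) equals 2^{N(N−1)/2} · (∏_{k=1}^{N} sin(y_k)) · ∏_{1≤i<j≤N} ( cos(y_j) − cos(y_i) ). -/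
open Real

open Polynomial Polynomial.Chebyshev in
private lemma U_deg_coeff : ∀ n : ℕ, (U ℝ (n : ℤ)).degree = n ∧ (U ℝ (n : ℤ)).coeff n = 2 ^ n := by
  intro n
  induction n using Nat.strong_induction_on with
  | _ n ih =>
    match n with
    | 0 => simp
    | 1 =>
      have hX : (U ℝ ((1 : ℕ) : ℤ)) = C 2 * X := by
        simp only [Nat.cast_one, U_one, ← map_ofNat (C : ℝ →+* ℝ[X]) 2]
      constructor
      · rw [hX, degree_C_mul (by norm_num), degree_X]
        norm_num
      · simp [hX]
    | (n + 2) =>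
      have h1 := ih (n + 1) (by omega)
      have h0 := ih n (by omega)
      have hU : U ℝ ((n + 2 : ℕ) : ℤ) = 2 * X * U ℝ ((n + 1 : ℕ) : ℤ) - U ℝ (n : ℤ) := by
        push_cast
        exact U_add_two ℝ n
      have h2X : (2 * X : ℝ[X]) = C 2 * X := by
        rw [map_ofNat (C : ℝ →+* ℝ[X]) 2]
      have hdm : (2 * X * U ℝ ((n + 1 : ℕ) : ℤ)).degree = ((n + 2 : ℕ) : WithBot ℕ) := by
        rw [degree_mul, h2X, degree_C_mul (by norm_num), degree_X, h1.1]
        rw [← Nat.cast_one, ← Nat.cast_add]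
        norm_cast
        omega
      have hlt : (U ℝ (n : ℤ)).degree < (2 * X * U ℝ ((n + 1 : ℕ) : ℤ)).degree := by
        rw [hdm, h0.1]
        exact_mod_cast Nat.lt_of_lt_of_le (Nat.lt_succ_self n) (by omega)
      have hlt2 : (U ℝ (n : ℤ)).degree < ((n + 2 : ℕ) : WithBot ℕ) := hdm ▸ hlt
      constructor
      · rw [hU, degree_sub_eq_left_of_degree_lt hlt, hdm]
      · rw [hU, coeff_sub, coeff_eq_zero_of_degree_lt hlt2, sub_zero,
          h2X, mul_assoc, coeff_C_mul, coeff_X_mul, h1.2]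
        ring

open Polynomial in
/-- Sine Vandermonde identity: `det (sin (j yᵢ))_{i,j=1}^N
= 2^{N(N-1)/2} ∏ₖ sin yₖ ∏_{i<j} (cos yⱼ − cos yᵢ)`. -/
theorem statement_11 (N : ℕ) (hN : 1 ≤ N) (y : Fin N → ℝ) :
    Matrix.det (Matrix.of fun i j : Fin N => Real.sin (((j : ℕ) + 1) * y i)) =
      2 ^ (N * (N - 1) / 2) * (∏ k, Real.sin (y k)) *
        ∏ p ∈ Finset.univ.filter (fun p : Fin N × Fin N => p.1 < p.2),
          (Real.cos (y p.2) - Real.cos (y p.1)) := by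
  classical
  set Uc := fun n : ℕ => Polynomial.Chebyshev.U ℝ (n : ℤ) with hUdef
  -- step 1: entry = sin(y i) * U_j (cos y_i)
  have hentry : ∀ i j : Fin N,
      Real.sin (((j : ℕ) + 1) * y i) = Real.sin (y i) * (Uc j).eval (Real.cos (y i)) := by
    intro i j
    have := Polynomial.Chebyshev.U_real_cos (y i) (j : ℤ)
    rw [mul_comm] at this
    push_cast at this
    rw [← this, hUdef]
  have step1 : Matrix.det (Matrix.of fun i j : Fin N => Real.sin (((j : ℕ) + 1) * y i)) =
      (∏ k, Real.sin (y k)) *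
        Matrix.det (Matrix.of fun i j : Fin N => (Uc j).eval (Real.cos (y i))) := by
    rw [← Matrix.det_mul_column]
    congr 1
    ext i j
    exact hentry i j
  -- step 2: monic polynomials q j = C (2^j)⁻¹ * U j
  set q : Fin N → ℝ[X] := fun j => Polynomial.C ((2 : ℝ) ^ (j : ℕ))⁻¹ * Uc j with hq
  have hdeg : ∀ j : Fin N, (q j).natDegree = j := by
    intro j
    rw [hq]
    have h := (U_deg_coeff j).1
    rw [Polynomial.natDegree_C_mul (by positivity)]
    exact Polynomial.natDegree_eq_of_degree_eq_some h
  have hmonic : ∀ j : Fin N, (q j).Monic := by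
    intro j
    have h := U_deg_coeff (j : ℕ)
    have hd : (Uc j).natDegree = j := Polynomial.natDegree_eq_of_degree_eq_some h.1
    unfold Polynomial.Monic
    rw [hq, Polynomial.leadingCoeff, Polynomial.natDegree_C_mul (by positivity),
      Polynomial.coeff_C_mul, hd]
    rw [show Uc (j : ℕ) = Polynomial.Chebyshev.U ℝ ((j : ℕ) : ℤ) from rfl, h.2]
    field_simp
  have hvdm := Matrix.det_eval_matrixOfPolynomials_eq_det_vandermonde
    (fun i => Real.cos (y i)) q hdeg hmonic
  have step2 : Matrix.det (Matrix.of fun i j : Fin N => (Uc j).eval (Real.cos (y i))) =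
      (∏ j : Fin N, (2 : ℝ) ^ (j : ℕ)) *
        Matrix.det (Matrix.vandermonde fun i => Real.cos (y i)) := by
    have hmr := Matrix.det_mul_row (fun j : Fin N => ((2 : ℝ) ^ (j : ℕ))⁻¹)
      (Matrix.of fun i j : Fin N => (Uc j).eval (Real.cos (y i)))
    rw [hvdm]
    have heq : (Matrix.of fun i j : Fin N => (q j).eval (Real.cos (y i))) =
        Matrix.of fun i j : Fin N => ((2 : ℝ) ^ (j : ℕ))⁻¹ *
          (Matrix.of fun i j : Fin N => (Uc j).eval (Real.cos (y i))) i j := by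
      ext i j
      simp [hq]
    rw [heq, hmr, ← mul_assoc, ← Finset.prod_mul_distrib]
    simp
  -- step 3: powers of 2
  have hpow : (∏ j : Fin N, (2 : ℝ) ^ (j : ℕ)) = 2 ^ (N * (N - 1) / 2) := by
    rw [Finset.prod_pow_eq_pow_sum]
    congr 1
    rw [Fin.sum_univ_eq_sum_range (fun i => i) N, Finset.sum_range_id]
  -- step 4: pair product
  have hpair : (∏ p ∈ Finset.univ.filter (fun p : Fin N × Fin N => p.1 < p.2),
        (Real.cos (y p.2) - Real.cos (y p.1))) =
      ∏ i, ∏ j ∈ Finset.Ioi i, (Real.cos (y j) - Real.cos (y i)) := by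
    rw [Finset.prod_sigma']
    exact Finset.prod_nbij' (fun p => ⟨p.1, p.2⟩) (fun x => (x.1, x.2))
      (by simp) (by simp) (by simp) (by simp) (by simp)
  rw [step1, step2, hpow, Matrix.det_vandermonde, ← hpair]
  ring
end

section
/- There exists a universal constant C > 0 such that for every integer N ≥ 1, every L > 0 and all x₁, x₂, x₃ ∈ [0,L], the 3×3 determinant ρ^{(3)}(x₁,x₂,x₃) := det( γ(x_i, x_j) )_{i,j=1}^{3} satisfies |ρ^{(3)}(x₁,x₂,x₃)| ≤ C·ρ⁹·(x₁ − x₂)²·(x₂ − x₃)²·(x₁ − x₃)², where ρ := N/L and γ(x,y) := (2/L)·Σ_{j=1}^{N} sin(πjx/L)·sin(πjy/L). -/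
open MeasureTheory Real

noncomputable section

/-- The one-body reduced density matrix of the Dirichlet free Fermi ground state on `[0,L]`. -/
def fermiKernel (N : ℕ) (L : ℝ) (x y : ℝ) : ℝ :=
  (2 / L) * ∑ j ∈ Finset.Icc 1 N,
    Real.sin (π * (j : ℝ) * x / L) * Real.sin (π * (j : ℝ) * y / L)

lemma cos_lip (a b : ℝ) : |Real.cos b - Real.cos a| ≤ |b - a| := by
  have hd : ∀ x ∈ Set.uIcc a b, HasDerivWithinAt Real.cos (-Real.sin x) (Set.uIcc a b) x :=
    fun x _ => (Real.hasDerivAt_cos x).hasDerivWithinAt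
  have hb : ∀ x ∈ Set.uIcc a b, ‖-Real.sin x‖ ≤ 1 := by
    intro x _
    rw [norm_neg, Real.norm_eq_abs]
    exact Real.abs_sin_le_one x
  have := (convex_uIcc a b).norm_image_sub_le_of_norm_hasDerivWithin_le hd hb
    Set.left_mem_uIcc Set.right_mem_uIcc
  simpa [Real.norm_eq_abs] using this

lemma sin_lip (a b : ℝ) : |Real.sin b - Real.sin a| ≤ |b - a| := by
  have hd : ∀ x ∈ Set.uIcc a b, HasDerivWithinAt Real.sin (Real.cos x) (Set.uIcc a b) x :=
    fun x _ => (Real.hasDerivAt_sin x).hasDerivWithinAt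
  have hb : ∀ x ∈ Set.uIcc a b, ‖Real.cos x‖ ≤ 1 := by
    intro x _
    rw [Real.norm_eq_abs]
    exact Real.abs_cos_le_one x
  have := (convex_uIcc a b).norm_image_sub_le_of_norm_hasDerivWithin_le hd hb
    Set.left_mem_uIcc Set.right_mem_uIcc
  simpa [Real.norm_eq_abs] using this

lemma sin_taylor (c a b : ℝ) (hc : 0 ≤ c) :
    |Real.sin (c*b) - Real.sin (c*a) - c * Real.cos (c*a) * (b - a)| ≤ c^2 * (b-a)^2 := by
  have hderiv : ∀ x : ℝ, HasDerivAt (fun x => Real.sin (c*x) - c * Real.cos (c*a) * x)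
      (c * Real.cos (c*x) - c * Real.cos (c*a)) x := by
    intro x
    have h1 : HasDerivAt (fun x : ℝ => Real.sin (c*x)) (c * Real.cos (c*x)) x := by
      have := (Real.hasDerivAt_sin (c*x)).comp x ((hasDerivAt_id x).const_mul c)
      simpa [mul_comm, Function.comp_def] using this
    have h2 : HasDerivAt (fun x : ℝ => c * Real.cos (c*a) * x) (c * Real.cos (c*a)) x := by
      simpa using (hasDerivAt_id x).const_mul (c * Real.cos (c*a))
    exact h1.sub h2
  have hbound : ∀ x ∈ Set.uIcc a b, ‖c * Real.cos (c*x) - c * Real.cos (c*a)‖ ≤ c^2 * |b - a| := by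
    intro x hx
    have hxa : |x - a| ≤ |b - a| := by
      rcases Set.mem_uIcc.mp hx with ⟨h1, h2⟩ | ⟨h1, h2⟩ <;>
        (rw [abs_le]; constructor <;>
          nlinarith [le_abs_self (b-a), neg_abs_le (b-a)])
    have hcos : |Real.cos (c*x) - Real.cos (c*a)| ≤ |c*x - c*a| := cos_lip _ _
    calc ‖c * Real.cos (c*x) - c * Real.cos (c*a)‖
        = c * |Real.cos (c*x) - Real.cos (c*a)| := by
          rw [Real.norm_eq_abs, ← mul_sub, abs_mul, abs_of_nonneg hc]
      _ ≤ c * |c * x - c * a| := mul_le_mul_of_nonneg_left hcos hc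
      _ = c^2 * |x - a| := by rw [← mul_sub, abs_mul, abs_of_nonneg hc]; ring
      _ ≤ c^2 * |b - a| := mul_le_mul_of_nonneg_left hxa (sq_nonneg c)
  have H := (convex_uIcc a b).norm_image_sub_le_of_norm_hasDerivWithin_le
    (fun x _ => (hderiv x).hasDerivWithinAt) hbound Set.left_mem_uIcc Set.right_mem_uIcc
  rw [Real.norm_eq_abs, Real.norm_eq_abs] at H
  calc |Real.sin (c*b) - Real.sin (c*a) - c * Real.cos (c*a) * (b - a)|
      = |(Real.sin (c*b) - c * Real.cos (c*a) * b) - (Real.sin (c*a) - c * Real.cos (c*a) * a)| := by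
        congr 1; ring
    _ ≤ c^2 * |b - a| * |b - a| := H
    _ = c^2 * (b-a)^2 := by rw [mul_assoc, abs_mul_abs_self]; ring


lemma key_sorted (N : ℕ) (L : ℝ) (hN : 1 ≤ N) (hL : 0 < L)
    (x₁ x₂ x₃ : ℝ) (hle12 : x₁ ≤ x₂) (hle23 : x₂ ≤ x₃) :
    |Matrix.det (Matrix.of fun i j : Fin 3 =>
        fermiKernel N L (![x₁, x₂, x₃] i) (![x₁, x₂, x₃] j))| ≤
      48 * π^6 * ((N:ℝ)/L)^9 * (x₁-x₂)^2 * (x₂-x₃)^2 * (x₁-x₃)^2 := by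
  rcases eq_or_lt_of_le hle12 with he | h12
  · have hdet : (Matrix.of fun i j : Fin 3 =>
        fermiKernel N L (![x₁, x₂, x₃] i) (![x₁, x₂, x₃] j)).det = 0 := by
      apply Matrix.det_zero_of_row_eq (i := (0 : Fin 3)) (j := 1) (by decide)
      funext k
      show fermiKernel N L x₁ _ = fermiKernel N L x₂ _
      rw [he]
    rw [hdet, abs_zero]
    have hz : x₁ - x₂ = 0 := by rw [he, sub_self]
    rw [hz]
    norm_num
  rcases eq_or_lt_of_le hle23 with he | h23
  · have hdet : (Matrix.of fun i j : Fin 3 =>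
        fermiKernel N L (![x₁, x₂, x₃] i) (![x₁, x₂, x₃] j)).det = 0 := by
      apply Matrix.det_zero_of_row_eq (i := (1 : Fin 3)) (j := 2) (by decide)
      funext k
      show fermiKernel N L x₂ _ = fermiKernel N L x₃ _
      rw [he]
    rw [hdet, abs_zero]
    have hz : x₂ - x₃ = 0 := by rw [he, sub_self]
    rw [hz]
    norm_num
  have h13 : x₁ < x₃ := h12.trans h23
  have h21 : x₂ - x₁ ≠ 0 := sub_ne_zero.mpr h12.ne'
  have h31 : x₃ - x₁ ≠ 0 := sub_ne_zero.mpr h13.ne'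
  have h32 : x₃ - x₂ ≠ 0 := sub_ne_zero.mpr h23.ne'
  set v : Fin 3 → ℝ := ![x₁, x₂, x₃] with hv
  set S := Finset.Icc 1 N with hS
  set φ : ℕ → ℝ → ℝ := fun j x => Real.sin (π * j / L * x) with hφ
  have hK : ∀ x y, fermiKernel N L x y = (2/L) * ∑ j ∈ S, φ j x * φ j y := by
    intro x y
    unfold fermiKernel
    rw [← hS]
    refine congrArg _ (Finset.sum_congr rfl fun j _ => ?_)
    rw [hφ]
    simp only []
    rw [div_mul_eq_mul_div, div_mul_eq_mul_div]
  set d : (ℝ → ℝ) → Fin 3 → ℝ := fun h => ![h x₁, (h x₂ - h x₁)/(x₂-x₁),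
      (h x₃ - h x₁ - (h x₂ - h x₁)/(x₂-x₁) * (x₃-x₁)) / ((x₃-x₁)*(x₃-x₂))] with hd
  set W : Matrix (Fin 3) (Fin 3) ℝ :=
    !![1,0,0; 1,x₂-x₁,0; 1,x₃-x₁,(x₃-x₁)*(x₃-x₂)] with hW
  have hd0 : ∀ h : ℝ → ℝ, d h 0 = h x₁ := fun h => rfl
  have hd1 : ∀ h : ℝ → ℝ, d h 1 = (h x₂ - h x₁)/(x₂-x₁) := fun h => rfl
  have hd2 : ∀ h : ℝ → ℝ, d h 2 = (h x₃ - h x₁ - (h x₂ - h x₁)/(x₂-x₁)*(x₃-x₁)) / ((x₃-x₁)*(x₃-x₂)) := fun h => rfl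
  have newton : ∀ (h : ℝ → ℝ) (i : Fin 3), h (v i) = ∑ a, W i a * d h a := by
    intro h i
    fin_cases i <;>
      simp [Fin.sum_univ_three, hW, hd, hv] <;>
      field_simp <;> ring
  set A : Matrix (Fin 3) (Fin 3) ℝ :=
    Matrix.of (fun a b : Fin 3 => (2/L) * ∑ j ∈ S, d (φ j) a * d (φ j) b) with hA
  have hfact : (Matrix.of fun i j : Fin 3 => fermiKernel N L (v i) (v j)) = W * A * W.transpose := by
    ext i k
    show fermiKernel N L (v i) (v k) = (W * A * W.transpose) i k
    have e1 : (W * A * W.transpose) i k = ∑ b, ∑ a, (W i a * A a b) * W k b := by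
      simp [Matrix.mul_apply, Matrix.transpose_apply, Finset.sum_mul]
    rw [e1]
    calc fermiKernel N L (v i) (v k)
        = (2/L) * ∑ j ∈ S, φ j (v i) * φ j (v k) := hK _ _
      _ = (2/L) * ∑ j ∈ S, ∑ a, ∑ b, (W i a * d (φ j) a) * (W k b * d (φ j) b) := by
          refine congrArg _ (Finset.sum_congr rfl fun j _ => ?_)
          rw [newton (φ j) i, newton (φ j) k, Finset.sum_mul_sum]
      _ = ∑ a, ∑ b, ∑ j ∈ S, (2/L) * ((W i a * d (φ j) a) * (W k b * d (φ j) b)) := by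
          rw [Finset.mul_sum]
          simp_rw [Finset.mul_sum]
          rw [Finset.sum_comm]
          exact Finset.sum_congr rfl fun a _ => Finset.sum_comm
      _ = ∑ b, ∑ a, (W i a * A a b) * W k b := by
          rw [Finset.sum_comm]
          refine Finset.sum_congr rfl fun b _ => Finset.sum_congr rfl fun a _ => ?_
          rw [hA]
          simp only [Matrix.of_apply]
          rw [Finset.mul_sum, Finset.mul_sum, Finset.sum_mul]
          exact Finset.sum_congr rfl fun j _ => by ring
  set K := π * (N:ℝ) / L with hKdef
  have hK0 : 0 ≤ K := div_nonneg (by positivity) hL.le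
  have hdb : ∀ j ∈ S, ∀ a : Fin 3, |d (φ j) a| ≤ K ^ (a : ℕ) := by
    intro j hj a
    obtain ⟨hj1, hjN⟩ := Finset.mem_Icc.mp hj
    have hc0 : 0 ≤ π * (j:ℝ) / L := div_nonneg (by positivity) hL.le
    have hcK : π * (j:ℝ) / L ≤ K := by
      rw [hKdef]
      have : (j:ℝ) ≤ (N:ℝ) := Nat.cast_le.mpr hjN
      gcongr
    have hφj : ∀ x, φ j x = Real.sin (π * (j:ℝ) / L * x) := fun x => by rw [hφ]
    fin_cases a
    · show |d (φ j) 0| ≤ K ^ (0:ℕ)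
      rw [hd0, pow_zero, hφj]
      exact Real.abs_sin_le_one _
    · show |d (φ j) 1| ≤ K ^ (1:ℕ)
      have hlip : |Real.sin (π * (j:ℝ) / L * x₂) - Real.sin (π * (j:ℝ) / L * x₁)|
          ≤ (π * (j:ℝ) / L) * |x₂ - x₁| := by
        calc |Real.sin (π * (j:ℝ) / L * x₂) - Real.sin (π * (j:ℝ) / L * x₁)|
            ≤ |π * (j:ℝ) / L * x₂ - π * (j:ℝ) / L * x₁| := sin_lip _ _
          _ = (π * (j:ℝ) / L) * |x₂ - x₁| := by
              rw [← mul_sub, abs_mul, abs_of_nonneg hc0]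
      rw [hd1, pow_one, abs_div, div_le_iff₀ (abs_pos.mpr h21)]
      calc |φ j x₂ - φ j x₁| ≤ (π * (j:ℝ) / L) * |x₂ - x₁| := by rw [hφj, hφj]; exact hlip
        _ ≤ K * |x₂ - x₁| := mul_le_mul_of_nonneg_right hcK (abs_nonneg _)
    · show |d (φ j) 2| ≤ K ^ (2:ℕ)
      set c := π * (j:ℝ) / L with hc
      have hident : d (φ j) 2 =
          ((φ j x₃ - φ j x₂)/(x₃-x₂) - (φ j x₂ - φ j x₁)/(x₂-x₁)) / (x₃-x₁) := by
        rw [hd2]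
        field_simp
        ring
      have t1 := sin_taylor c x₂ x₃ hc0
      have t2 := sin_taylor c x₂ x₁ hc0
      have hs23 : |(φ j x₃ - φ j x₂)/(x₃-x₂) - c * Real.cos (c*x₂)| ≤ c^2*(x₃-x₂) := by
        rw [hφj, hφj, div_sub' h32, abs_div, div_le_iff₀ (abs_pos.mpr h32)]
        calc |Real.sin (c*x₃) - Real.sin (c*x₂) - (x₃-x₂) * (c * Real.cos (c*x₂))|
            = |Real.sin (c*x₃) - Real.sin (c*x₂) - c * Real.cos (c*x₂) * (x₃-x₂)| := by
              congr 1; ring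
          _ ≤ c^2 * (x₃-x₂)^2 := t1
          _ = c^2*(x₃-x₂) * |x₃-x₂| := by
              rw [abs_of_pos (sub_pos.mpr h23)]; ring
      have hs12 : |(φ j x₂ - φ j x₁)/(x₂-x₁) - c * Real.cos (c*x₂)| ≤ c^2*(x₂-x₁) := by
        rw [hφj, hφj, div_sub' h21, abs_div, div_le_iff₀ (abs_pos.mpr h21)]
        calc |Real.sin (c*x₂) - Real.sin (c*x₁) - (x₂-x₁) * (c * Real.cos (c*x₂))|
            = |Real.sin (c*x₁) - Real.sin (c*x₂) - c * Real.cos (c*x₂) * (x₁-x₂)| := by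
              rw [← abs_neg]; congr 1; ring
          _ ≤ c^2 * (x₁-x₂)^2 := t2
          _ = c^2*(x₂-x₁) * |x₂-x₁| := by
              rw [abs_of_pos (sub_pos.mpr h12)]; ring
      have hnum : |(φ j x₃ - φ j x₂)/(x₃-x₂) - (φ j x₂ - φ j x₁)/(x₂-x₁)| ≤ c^2*(x₃-x₁) := by
        calc |(φ j x₃ - φ j x₂)/(x₃-x₂) - (φ j x₂ - φ j x₁)/(x₂-x₁)|
            ≤ |(φ j x₃ - φ j x₂)/(x₃-x₂) - c * Real.cos (c*x₂)|
              + |c * Real.cos (c*x₂) - (φ j x₂ - φ j x₁)/(x₂-x₁)| := abs_sub_le _ _ _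
          _ ≤ c^2*(x₃-x₂) + c^2*(x₂-x₁) := by
              refine add_le_add hs23 ?_
              rw [abs_sub_comm]; exact hs12
          _ = c^2*(x₃-x₁) := by ring
      have hc2 : |d (φ j) 2| ≤ c^2 := by
        rw [hident, abs_div, div_le_iff₀ (abs_pos.mpr h31)]
        calc |(φ j x₃ - φ j x₂)/(x₃-x₂) - (φ j x₂ - φ j x₁)/(x₂-x₁)| ≤ c^2*(x₃-x₁) := hnum
          _ = c^2 * |x₃-x₁| := by rw [abs_of_pos (sub_pos.mpr h13)]
      exact hc2.trans (pow_le_pow_left₀ hc0 hcK 2)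
  have hQ0 : (0:ℝ) ≤ 2*(N:ℝ)/L := div_nonneg (by positivity) hL.le
  have hAb : ∀ a b : Fin 3, |A a b| ≤ (2*(N:ℝ)/L) * (K^(a:ℕ) * K^(b:ℕ)) := by
    intro a b
    have h2L : (0:ℝ) < 2/L := div_pos two_pos hL
    have step : |A a b| ≤ (2/L) * ∑ _j ∈ S, K^(a:ℕ) * K^(b:ℕ) := by
      rw [hA]
      simp only [Matrix.of_apply]
      rw [abs_mul, abs_of_pos h2L]
      refine mul_le_mul_of_nonneg_left ?_ h2L.le
      calc |∑ j ∈ S, d (φ j) a * d (φ j) b| ≤ ∑ j ∈ S, |d (φ j) a * d (φ j) b| :=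
            Finset.abs_sum_le_sum_abs _ _
        _ ≤ ∑ _j ∈ S, K^(a:ℕ) * K^(b:ℕ) := Finset.sum_le_sum fun j hj => by
            rw [abs_mul]
            exact mul_le_mul (hdb j hj a) (hdb j hj b) (abs_nonneg _) (pow_nonneg hK0 _)
    calc |A a b| ≤ (2/L) * ∑ _j ∈ S, K^(a:ℕ)*K^(b:ℕ) := step
      _ = (2*(N:ℝ)/L) * (K^(a:ℕ)*K^(b:ℕ)) := by
          rw [Finset.sum_const, hS, Nat.card_Icc, nsmul_eq_mul]
          norm_num
          ring
  have hB0 : ∀ a b : Fin 3, (0:ℝ) ≤ (2*(N:ℝ)/L) * (K^(a:ℕ) * K^(b:ℕ)) :=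
    fun a b => mul_nonneg hQ0 (mul_nonneg (pow_nonneg hK0 _) (pow_nonneg hK0 _))
  have B : ∀ (a b a' b' a'' b'' : Fin 3),
      ((a:ℕ)+(b:ℕ)+(a':ℕ)+(b':ℕ)+(a'':ℕ)+(b'':ℕ) = 6) →
      |A a b * A a' b' * A a'' b''| ≤ (2*(N:ℝ)/L)^3 * K^6 := by
    intro a b a' b' a'' b'' hsum
    rw [abs_mul, abs_mul]
    calc |A a b| * |A a' b'| * |A a'' b''|
        ≤ ((2*(N:ℝ)/L)*(K^(a:ℕ)*K^(b:ℕ))) * ((2*(N:ℝ)/L)*(K^(a':ℕ)*K^(b':ℕ)))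
            * ((2*(N:ℝ)/L)*(K^(a'':ℕ)*K^(b'':ℕ))) := by
          exact mul_le_mul
            (mul_le_mul (hAb a b) (hAb a' b') (abs_nonneg _) (hB0 a b))
            (hAb a'' b'') (abs_nonneg _) (mul_nonneg (hB0 a b) (hB0 a' b'))
      _ = (2*(N:ℝ)/L)^3 * K^((a:ℕ)+(b:ℕ)+(a':ℕ)+(b':ℕ)+(a'':ℕ)+(b'':ℕ)) := by
          rw [pow_add, pow_add, pow_add, pow_add, pow_add]; ring
      _ = (2*(N:ℝ)/L)^3 * K^6 := by rw [hsum]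
  have hdetA : |A.det| ≤ 6 * ((2*(N:ℝ)/L)^3 * K^6) := by
    rw [Matrix.det_fin_three]
    have t1 := abs_le.mp (B 0 0 1 1 2 2 rfl)
    have t2 := abs_le.mp (B 0 0 1 2 2 1 rfl)
    have t3 := abs_le.mp (B 0 1 1 0 2 2 rfl)
    have t4 := abs_le.mp (B 0 1 1 2 2 0 rfl)
    have t5 := abs_le.mp (B 0 2 1 0 2 1 rfl)
    have t6 := abs_le.mp (B 0 2 1 1 2 0 rfl)
    rw [abs_le]
    constructor <;> linarith [t1.1, t1.2, t2.1, t2.2, t3.1, t3.2, t4.1, t4.2, t5.1, t5.2, t6.1, t6.2]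
  have hdetW : W.det = (x₂-x₁) * ((x₃-x₁)*(x₃-x₂)) := by
    rw [hW, Matrix.det_fin_three]
    simp
  have final : |(Matrix.of fun i j : Fin 3 => fermiKernel N L (v i) (v j)).det| ≤
      48 * π^6 * ((N:ℝ)/L)^9 * (x₁-x₂)^2 * (x₂-x₃)^2 * (x₁-x₃)^2 := by
    rw [hfact, Matrix.det_mul, Matrix.det_mul, Matrix.det_transpose, hdetW]
    rw [abs_mul, abs_mul]
    calc |(x₂-x₁)*((x₃-x₁)*(x₃-x₂))| * |A.det| * |(x₂-x₁)*((x₃-x₁)*(x₃-x₂))|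
        = ((x₂-x₁)*((x₃-x₁)*(x₃-x₂)))^2 * |A.det| := by
          rw [show |(x₂-x₁)*((x₃-x₁)*(x₃-x₂))| * |A.det| * |(x₂-x₁)*((x₃-x₁)*(x₃-x₂))|
              = |(x₂-x₁)*((x₃-x₁)*(x₃-x₂))| * |(x₂-x₁)*((x₃-x₁)*(x₃-x₂))| * |A.det| from by ring,
            abs_mul_abs_self]
          ring
      _ ≤ ((x₂-x₁)*((x₃-x₁)*(x₃-x₂)))^2 * (6 * ((2*(N:ℝ)/L)^3 * K^6)) :=
          mul_le_mul_of_nonneg_left hdetA (sq_nonneg _)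
      _ = 48 * π^6 * ((N:ℝ)/L)^9 * (x₁-x₂)^2 * (x₂-x₃)^2 * (x₁-x₃)^2 := by
          rw [hKdef]
          field_simp
          ring
  exact final

lemma abs_det_perm (N : ℕ) (L : ℝ) (x₁ x₂ x₃ y₁ y₂ y₃ : ℝ) (e : Fin 3 ≃ Fin 3)
    (h : ∀ i, ![y₁, y₂, y₃] i = ![x₁, x₂, x₃] (e i)) :
    Matrix.det (Matrix.of fun i j : Fin 3 =>
        fermiKernel N L (![y₁, y₂, y₃] i) (![y₁, y₂, y₃] j))
      = Matrix.det (Matrix.of fun i j : Fin 3 =>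
        fermiKernel N L (![x₁, x₂, x₃] i) (![x₁, x₂, x₃] j)) := by
  have hm : (Matrix.of fun i j : Fin 3 =>
      fermiKernel N L (![y₁, y₂, y₃] i) (![y₁, y₂, y₃] j))
      = (Matrix.of fun i j : Fin 3 =>
        fermiKernel N L (![x₁, x₂, x₃] i) (![x₁, x₂, x₃] j)).submatrix e e := by
    ext i j
    simp only [Matrix.submatrix_apply, Matrix.of_apply, h i, h j]
  rw [hm, Matrix.det_submatrix_equiv_self]

/-- Bound on the three-body reduced density of the free Fermi ground state. -/
theorem statement_14 :
    ∃ C : ℝ, 0 < C ∧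
      ∀ (N : ℕ) (L : ℝ), 1 ≤ N → 0 < L →
        ∀ x₁ x₂ x₃ : ℝ, x₁ ∈ Set.Icc (0 : ℝ) L → x₂ ∈ Set.Icc (0 : ℝ) L →
          x₃ ∈ Set.Icc (0 : ℝ) L →
          |Matrix.det (Matrix.of fun i j : Fin 3 =>
              fermiKernel N L (![x₁, x₂, x₃] i) (![x₁, x₂, x₃] j))| ≤
            C * ((N : ℝ) / L) ^ 9 * (x₁ - x₂) ^ 2 * (x₂ - x₃) ^ 2 * (x₁ - x₃) ^ 2 := by
  refine ⟨48 * π^6, by positivity, ?_⟩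
  intro N L hN hL x₁ x₂ x₃ _ _ _
  rcases le_total x₁ x₂ with h12 | h12
  · rcases le_total x₂ x₃ with h23 | h23
    · -- x₁ ≤ x₂ ≤ x₃
      exact key_sorted N L hN hL x₁ x₂ x₃ h12 h23
    · rcases le_total x₁ x₃ with h13 | h13
      · -- x₁ ≤ x₃ ≤ x₂
        have hk := key_sorted N L hN hL x₁ x₃ x₂ h13 h23
        rw [abs_det_perm N L x₁ x₂ x₃ x₁ x₃ x₂ ⟨![0,2,1], ![0,2,1], by decide, by decide⟩
          (by intro i; fin_cases i <;> rfl)] at hk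
        exact hk.trans_eq (by ring)
      · -- x₃ ≤ x₁ ≤ x₂
        have hk := key_sorted N L hN hL x₃ x₁ x₂ h13 h12
        rw [abs_det_perm N L x₁ x₂ x₃ x₃ x₁ x₂ ⟨![2,0,1], ![1,2,0], by decide, by decide⟩
          (by intro i; fin_cases i <;> rfl)] at hk
        exact hk.trans_eq (by ring)
  · rcases le_total x₁ x₃ with h13 | h13
    · -- x₂ ≤ x₁ ≤ x₃
      have hk := key_sorted N L hN hL x₂ x₁ x₃ h12 h13
      rw [abs_det_perm N L x₁ x₂ x₃ x₂ x₁ x₃ ⟨![1,0,2], ![1,0,2], by decide, by decide⟩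
        (by intro i; fin_cases i <;> rfl)] at hk
      exact hk.trans_eq (by ring)
    · rcases le_total x₂ x₃ with h23 | h23
      · -- x₂ ≤ x₃ ≤ x₁
        have hk := key_sorted N L hN hL x₂ x₃ x₁ h23 h13
        rw [abs_det_perm N L x₁ x₂ x₃ x₂ x₃ x₁ ⟨![1,2,0], ![2,0,1], by decide, by decide⟩
          (by intro i; fin_cases i <;> rfl)] at hk
        exact hk.trans_eq (by ring)
      · -- x₃ ≤ x₂ ≤ x₁
        have hk := key_sorted N L hN hL x₃ x₂ x₁ h23 h12
        rw [abs_det_perm N L x₁ x₂ x₃ x₃ x₂ x₁ ⟨![2,1,0], ![2,1,0], by decide, by decide⟩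
          (by intro i; fin_cases i <;> rfl)] at hk
        exact hk.trans_eq (by ring)
end
end

section
/- There exists a universal constant C > 0 such that for every integer N ≥ 1, every L > 0 and all x₁, x₂, x₃, x₄ ∈ [0,L], the 4×4 determinant ρ^{(4)}(x₁,x₂,x₃,x₄) := det( γ(x_i, x_j) )_{i,j=1}^{4} satisfies |ρ^{(4)}(x₁,x₂,x₃,x₄)| ≤ C·ρ⁸·(x₁ − x₂)²·(x₃ − x₄)², where ρ := N/L and γ(x,y) := (2/L)·Σ_{j=1}^{N} sin(πjx/L)·sin(πjy/L). -/
open MeasureTheory Real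

noncomputable section

lemma abs_sin_sub' (a b : ℝ) : |Real.sin a - Real.sin b| ≤ |a - b| := by
  rw [Real.sin_sub_sin, abs_mul, abs_mul, abs_two]
  calc 2 * |Real.sin ((a-b)/2)| * |Real.cos ((a+b)/2)| ≤ 2 * |(a-b)/2| * 1 :=
        mul_le_mul (mul_le_mul_of_nonneg_left Real.abs_sin_le_abs two_pos.le)
          (Real.abs_cos_le_one _) (abs_nonneg _) (by positivity)
    _ = |a-b| := by rw [abs_div, abs_two]; ring

lemma sum_abs_le' (N : ℕ) (f : ℕ → ℝ) (B : ℝ)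
    (h : ∀ j ∈ Finset.Icc 1 N, |f j| ≤ B) :
    |∑ j ∈ Finset.Icc 1 N, f j| ≤ N * B := by
  calc |∑ j ∈ Finset.Icc 1 N, f j| ≤ ∑ j ∈ Finset.Icc 1 N, |f j| :=
        Finset.abs_sum_le_sum_abs _ _
    _ ≤ ∑ _j ∈ Finset.Icc 1 N, B := Finset.sum_le_sum h
    _ = N * B := by rw [Finset.sum_const, Nat.card_Icc]; simp

lemma kb0 (N : ℕ) (L : ℝ) (hL : 0 < L) (x y : ℝ) :
    |fermiKernel N L x y| ≤ 2 * π ^ 2 * ((N : ℝ) / L) := by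
  have hS := sum_abs_le' N
    (fun j => Real.sin (π * (j : ℝ) * x / L) * Real.sin (π * (j : ℝ) * y / L)) 1
    (fun j _ => by
      rw [abs_mul]
      exact mul_le_one₀ (Real.abs_sin_le_one _) (abs_nonneg _) (Real.abs_sin_le_one _))
  rw [fermiKernel, abs_mul, abs_div, abs_two, abs_of_pos hL]
  have hπ : (1:ℝ) ≤ π ^ 2 := by nlinarith [Real.pi_gt_three]
  calc 2 / L * |∑ j ∈ Finset.Icc 1 N,
        Real.sin (π * (j : ℝ) * x / L) * Real.sin (π * (j : ℝ) * y / L)|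
      ≤ 2 / L * ((N : ℝ) * 1) := by
        exact mul_le_mul_of_nonneg_left hS (by positivity)
    _ = 1 * (2 * ((N:ℝ)/L)) := by ring
    _ ≤ π ^ 2 * (2 * ((N:ℝ)/L)) := by
        exact mul_le_mul_of_nonneg_right hπ (by positivity)
    _ = 2 * π ^ 2 * ((N : ℝ) / L) := by ring

lemma kb1 (N : ℕ) (L : ℝ) (hL : 0 < L) (x x' y : ℝ) :
    |fermiKernel N L x y - fermiKernel N L x' y| ≤
      2 * π ^ 2 * ((N : ℝ) / L) ^ 2 * |x - x'| := by
  have key : fermiKernel N L x y - fermiKernel N L x' y =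
      (2 / L) * ∑ j ∈ Finset.Icc 1 N,
        (Real.sin (π * (j : ℝ) * x / L) - Real.sin (π * (j : ℝ) * x' / L)) *
          Real.sin (π * (j : ℝ) * y / L) := by
    unfold fermiKernel
    rw [← mul_sub, ← Finset.sum_sub_distrib]
    congr 1
    exact Finset.sum_congr rfl fun j _ => by ring
  have hS := sum_abs_le' N
    (fun j => (Real.sin (π * (j : ℝ) * x / L) - Real.sin (π * (j : ℝ) * x' / L)) *
          Real.sin (π * (j : ℝ) * y / L)) (π * N / L * |x - x'|)
    (fun j hj => by
      have hjN : (j : ℝ) ≤ N := Nat.cast_le.2 (Finset.mem_Icc.1 hj).2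
      rw [abs_mul]
      have h1 : |Real.sin (π * (j : ℝ) * x / L) - Real.sin (π * (j : ℝ) * x' / L)| ≤
          π * (j : ℝ) / L * |x - x'| := by
        refine (abs_sin_sub' _ _).trans (le_of_eq ?_)
        have heq : π * (j : ℝ) * x / L - π * (j : ℝ) * x' / L = (π * (j : ℝ) / L) * (x - x') := by
          ring
        rw [heq, abs_mul, abs_of_nonneg (show (0:ℝ) ≤ π * (j : ℝ) / L by positivity)]
      calc |Real.sin (π * (j : ℝ) * x / L) - Real.sin (π * (j : ℝ) * x' / L)| *
            |Real.sin (π * (j : ℝ) * y / L)|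
          ≤ (π * (j : ℝ) / L * |x - x'|) * 1 :=
            mul_le_mul h1 (Real.abs_sin_le_one _) (abs_nonneg _) (by positivity)
        _ ≤ π * (N : ℝ) / L * |x - x'| := by
            rw [mul_one]; gcongr)
  rw [key, abs_mul, abs_div, abs_two, abs_of_pos hL]
  have hπ : π ≤ π ^ 2 := by nlinarith [Real.pi_gt_three]
  calc 2 / L * |∑ j ∈ Finset.Icc 1 N,
        (Real.sin (π * (j : ℝ) * x / L) - Real.sin (π * (j : ℝ) * x' / L)) *
          Real.sin (π * (j : ℝ) * y / L)|
      ≤ 2 / L * ((N : ℝ) * (π * N / L * |x - x'|)) :=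
        mul_le_mul_of_nonneg_left hS (by positivity)
    _ = π * (2 * ((N:ℝ)/L)^2 * |x - x'|) := by ring
    _ ≤ π ^ 2 * (2 * ((N:ℝ)/L)^2 * |x - x'|) :=
        mul_le_mul_of_nonneg_right hπ (by positivity)
    _ = 2 * π ^ 2 * ((N : ℝ) / L) ^ 2 * |x - x'| := by ring

lemma ksymm (N : ℕ) (L : ℝ) (x y : ℝ) : fermiKernel N L x y = fermiKernel N L y x := by
  unfold fermiKernel
  congr 1
  exact Finset.sum_congr rfl fun j _ => mul_comm _ _

lemma kb1' (N : ℕ) (L : ℝ) (hL : 0 < L) (x y y' : ℝ) :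
    |fermiKernel N L x y - fermiKernel N L x y'| ≤
      2 * π ^ 2 * ((N : ℝ) / L) ^ 2 * |y - y'| := by
  rw [ksymm N L x y, ksymm N L x y']
  exact kb1 N L hL y y' x

lemma kb2 (N : ℕ) (L : ℝ) (hL : 0 < L) (x x' y y' : ℝ) :
    |fermiKernel N L x y - fermiKernel N L x' y - fermiKernel N L x y' +
        fermiKernel N L x' y'| ≤
      2 * π ^ 2 * ((N : ℝ) / L) ^ 3 * (|x - x'| * |y - y'|) := by
  have key : fermiKernel N L x y - fermiKernel N L x' y - fermiKernel N L x y' +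
        fermiKernel N L x' y' =
      (2 / L) * ∑ j ∈ Finset.Icc 1 N,
        (Real.sin (π * (j : ℝ) * x / L) - Real.sin (π * (j : ℝ) * x' / L)) *
          (Real.sin (π * (j : ℝ) * y / L) - Real.sin (π * (j : ℝ) * y' / L)) := by
    unfold fermiKernel
    rw [← mul_sub, ← mul_sub, ← mul_add]
    congr 1
    rw [← Finset.sum_sub_distrib, ← Finset.sum_sub_distrib, ← Finset.sum_add_distrib]
    exact Finset.sum_congr rfl fun j _ => by ring
  have hS := sum_abs_le' N
    (fun j => (Real.sin (π * (j : ℝ) * x / L) - Real.sin (π * (j : ℝ) * x' / L)) *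
          (Real.sin (π * (j : ℝ) * y / L) - Real.sin (π * (j : ℝ) * y' / L)))
    (π * N / L * |x - x'| * (π * N / L * |y - y'|))
    (fun j hj => by
      have hjN : (j : ℝ) ≤ N := Nat.cast_le.2 (Finset.mem_Icc.1 hj).2
      rw [abs_mul]
      have h1 : ∀ a a' : ℝ, |Real.sin (π * (j : ℝ) * a / L) - Real.sin (π * (j : ℝ) * a' / L)| ≤
          π * (N : ℝ) / L * |a - a'| := by
        intro a a'
        refine (abs_sin_sub' _ _).trans ?_
        have heq : π * (j : ℝ) * a / L - π * (j : ℝ) * a' / L = (π * (j : ℝ) / L) * (a - a') := by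
          ring
        rw [heq, abs_mul, abs_of_nonneg (show (0:ℝ) ≤ π * (j : ℝ) / L by positivity)]
        gcongr
      exact mul_le_mul (h1 x x') (h1 y y') (abs_nonneg _) (by positivity))
  rw [key, abs_mul, abs_div, abs_two, abs_of_pos hL]
  calc 2 / L * |∑ j ∈ Finset.Icc 1 N,
        (Real.sin (π * (j : ℝ) * x / L) - Real.sin (π * (j : ℝ) * x' / L)) *
          (Real.sin (π * (j : ℝ) * y / L) - Real.sin (π * (j : ℝ) * y' / L))|
      ≤ 2 / L * ((N : ℝ) * (π * N / L * |x - x'| * (π * N / L * |y - y'|))) :=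
        mul_le_mul_of_nonneg_left hS (by positivity)
    _ = 2 * π ^ 2 * ((N : ℝ) / L) ^ 3 * (|x - x'| * |y - y'|) := by ring

set_option maxHeartbeats 1000000 in
lemma detFinFour (A : Matrix (Fin 4) (Fin 4) ℝ) :
    A.det =
      A 0 0 * A 1 1 * A 2 2 * A 3 3 - A 0 0 * A 1 1 * A 2 3 * A 3 2 -
        A 0 0 * A 1 2 * A 2 1 * A 3 3 + A 0 0 * A 1 2 * A 2 3 * A 3 1 +
        A 0 0 * A 1 3 * A 2 1 * A 3 2 - A 0 0 * A 1 3 * A 2 2 * A 3 1 -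
        A 0 1 * A 1 0 * A 2 2 * A 3 3 + A 0 1 * A 1 0 * A 2 3 * A 3 2 +
        A 0 1 * A 1 2 * A 2 0 * A 3 3 - A 0 1 * A 1 2 * A 2 3 * A 3 0 -
        A 0 1 * A 1 3 * A 2 0 * A 3 2 + A 0 1 * A 1 3 * A 2 2 * A 3 0 +
        A 0 2 * A 1 0 * A 2 1 * A 3 3 - A 0 2 * A 1 0 * A 2 3 * A 3 1 -
        A 0 2 * A 1 1 * A 2 0 * A 3 3 + A 0 2 * A 1 1 * A 2 3 * A 3 0 +
        A 0 2 * A 1 3 * A 2 0 * A 3 1 - A 0 2 * A 1 3 * A 2 1 * A 3 0 -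
        A 0 3 * A 1 0 * A 2 1 * A 3 2 + A 0 3 * A 1 0 * A 2 2 * A 3 1 +
        A 0 3 * A 1 1 * A 2 0 * A 3 2 - A 0 3 * A 1 1 * A 2 2 * A 3 0 -
        A 0 3 * A 1 2 * A 2 0 * A 3 1 + A 0 3 * A 1 2 * A 2 1 * A 3 0 := by
  rw [Matrix.det_succ_row_zero, Fin.sum_univ_four]
  rw [Matrix.det_fin_three, Matrix.det_fin_three, Matrix.det_fin_three, Matrix.det_fin_three]
  simp only [Matrix.submatrix_apply]
  norm_num [show ∀ i : Fin 3, Fin.succAbove 0 i = i.succ from fun _ => rfl,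
    show (Fin.succAbove 1 0 : Fin 4) = 0 from rfl, show (Fin.succAbove 1 1 : Fin 4) = 2 from rfl,
    show (Fin.succAbove 1 2 : Fin 4) = 3 from rfl,
    show (Fin.succAbove 2 0 : Fin 4) = 0 from rfl, show (Fin.succAbove 2 1 : Fin 4) = 1 from rfl,
    show (Fin.succAbove 2 2 : Fin 4) = 3 from rfl,
    show (Fin.succAbove 3 0 : Fin 4) = 0 from rfl, show (Fin.succAbove 3 1 : Fin 4) = 1 from rfl,
    show (Fin.succAbove 3 2 : Fin 4) = 2 from rfl,
    show ((0 : Fin 3).succ : Fin 4) = 1 from rfl, show ((1 : Fin 3).succ : Fin 4) = 2 from rfl,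
    show ((2 : Fin 3).succ : Fin 4) = 3 from rfl, show ((3 : Fin 4) : ℕ) = 3 from rfl]
  ring

lemma det_abs_le' (A : Matrix (Fin 4) (Fin 4) ℝ) (b c : Fin 4 → ℝ)
    (h : ∀ i j, |A i j| ≤ b i * c j) :
    |A.det| ≤ 24 * ((∏ i, b i) * ∏ j, c j) := by
  rw [Matrix.det_apply]
  have step : ∀ σ : Equiv.Perm (Fin 4),
      |Equiv.Perm.sign σ • ∏ i, A (σ i) i| ≤ (∏ i, b i) * ∏ j, c j := by
    intro σ
    have h1 : |Equiv.Perm.sign σ • ∏ i, A (σ i) i| = |∏ i, A (σ i) i| := by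
      rcases Int.units_eq_one_or (Equiv.Perm.sign σ) with hs | hs <;>
        simp [hs, Units.smul_def]
    rw [h1, Finset.abs_prod]
    calc ∏ i, |A (σ i) i| ≤ ∏ i, (b (σ i) * c i) :=
          Finset.prod_le_prod (fun i _ => abs_nonneg _) (fun i _ => h _ _)
      _ = (∏ i, b (σ i)) * ∏ i, c i := Finset.prod_mul_distrib
      _ = _ := by rw [Equiv.prod_comp σ b]
  calc |∑ σ : Equiv.Perm (Fin 4), Equiv.Perm.sign σ • ∏ i, A (σ i) i|
      ≤ ∑ σ : Equiv.Perm (Fin 4), |Equiv.Perm.sign σ • ∏ i, A (σ i) i| :=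
        Finset.abs_sum_le_sum_abs _ _
    _ ≤ ∑ _σ : Equiv.Perm (Fin 4), ((∏ i, b i) * ∏ j, c j) :=
        Finset.sum_le_sum (fun σ _ => step σ)
    _ = 24 * ((∏ i, b i) * ∏ j, c j) := by
        rw [Finset.sum_const, Finset.card_univ, Fintype.card_perm]
        norm_num [Nat.factorial]

lemma finmk0 (h : 0 < 4) : (⟨0, h⟩ : Fin 4) = 0 := rfl
lemma finmk1 (h : 1 < 4) : (⟨1, h⟩ : Fin 4) = 1 := rfl
lemma finmk2 (h : 2 < 4) : (⟨2, h⟩ : Fin 4) = 2 := rfl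
lemma finmk3 (h : 3 < 4) : (⟨3, h⟩ : Fin 4) = 3 := rfl

/-- Bound on the four-body reduced density of the free Fermi ground state. -/
theorem statement_15 :
    ∃ C : ℝ, 0 < C ∧
      ∀ (N : ℕ) (L : ℝ), 1 ≤ N → 0 < L →
        ∀ x₁ x₂ x₃ x₄ : ℝ, x₁ ∈ Set.Icc (0 : ℝ) L → x₂ ∈ Set.Icc (0 : ℝ) L →
          x₃ ∈ Set.Icc (0 : ℝ) L → x₄ ∈ Set.Icc (0 : ℝ) L →
          |Matrix.det (Matrix.of fun i j : Fin 4 =>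
              fermiKernel N L (![x₁, x₂, x₃, x₄] i) (![x₁, x₂, x₃, x₄] j))| ≤
            C * ((N : ℝ) / L) ^ 8 * (x₁ - x₂) ^ 2 * (x₃ - x₄) ^ 2 := by
  refine ⟨384 * π ^ 8, by positivity, ?_⟩
  intro N L hN hL x₁ x₂ x₃ x₄ _ _ _ _
  set g : ℝ → ℝ → ℝ := fermiKernel N L with hg
  set ρ : ℝ := (N : ℝ) / L with hρ
  have hρ0 : (0:ℝ) ≤ ρ := by positivity
  set A : Matrix (Fin 4) (Fin 4) ℝ := Matrix.of
    ![![g x₁ x₁ - g x₂ x₁ - g x₁ x₂ + g x₂ x₂, g x₁ x₂ - g x₂ x₂,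
       g x₁ x₃ - g x₂ x₃ - g x₁ x₄ + g x₂ x₄, g x₁ x₄ - g x₂ x₄],
      ![g x₂ x₁ - g x₂ x₂, g x₂ x₂, g x₂ x₃ - g x₂ x₄, g x₂ x₄],
      ![g x₃ x₁ - g x₄ x₁ - g x₃ x₂ + g x₄ x₂, g x₃ x₂ - g x₄ x₂,
       g x₃ x₃ - g x₄ x₃ - g x₃ x₄ + g x₄ x₄, g x₃ x₄ - g x₄ x₄],
      ![g x₄ x₁ - g x₄ x₂, g x₄ x₂, g x₄ x₃ - g x₄ x₄, g x₄ x₄]] with hA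
  have hdet : Matrix.det (Matrix.of fun i j : Fin 4 =>
      fermiKernel N L (![x₁, x₂, x₃, x₄] i) (![x₁, x₂, x₃, x₄] j)) = A.det := by
    rw [detFinFour, detFinFour]
    simp only [hA, ← hg, Matrix.of_apply, Matrix.cons_val_zero, Matrix.cons_val_one,
      Matrix.head_cons,
      show ∀ (a b c d : ℝ), ![a,b,c,d] 2 = c from fun _ _ _ _ => rfl,
      show ∀ (a b c d : ℝ), ![a,b,c,d] 3 = d from fun _ _ _ _ => rfl,
      show ∀ (a b c d : Fin 4 → ℝ), ![a,b,c,d] 2 = c from fun _ _ _ _ => rfl,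
      show ∀ (a b c d : Fin 4 → ℝ), ![a,b,c,d] 3 = d from fun _ _ _ _ => rfl]
    ring
  rw [hdet]
  have hbound := det_abs_le' A
    (fun i => 2 * π ^ 2 * ρ * ![ρ * |x₁ - x₂|, 1, ρ * |x₃ - x₄|, 1] i)
    (![ρ * |x₁ - x₂|, 1, ρ * |x₃ - x₄|, 1]) ?_
  · refine hbound.trans (le_of_eq ?_)
    rw [Fin.prod_univ_four, Fin.prod_univ_four]
    simp only [Matrix.cons_val_zero, Matrix.cons_val_one, Matrix.head_cons,
      show ∀ (a b c d : ℝ), ![a,b,c,d] 2 = c from fun _ _ _ _ => rfl,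
      show ∀ (a b c d : ℝ), ![a,b,c,d] 3 = d from fun _ _ _ _ => rfl]
    rw [hρ, ← sq_abs (x₁ - x₂), ← sq_abs (x₃ - x₄)]
    ring
  · intro i j
    fin_cases i <;> fin_cases j <;>
      simp only [hA, Matrix.of_apply, Matrix.cons_val_zero, Matrix.cons_val_one,
        Matrix.head_cons, Matrix.cons_val', Matrix.empty_val', Matrix.cons_val_fin_one,
        show ∀ (a b c d : ℝ), ![a,b,c,d] 2 = c from fun _ _ _ _ => rfl,
        show ∀ (a b c d : ℝ), ![a,b,c,d] 3 = d from fun _ _ _ _ => rfl,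
        show ∀ (a b c d : Fin 4 → ℝ), ![a,b,c,d] 2 = c from fun _ _ _ _ => rfl,
        show ∀ (a b c d : Fin 4 → ℝ), ![a,b,c,d] 3 = d from fun _ _ _ _ => rfl, hg, hρ,
        finmk0, finmk1, finmk2, finmk3]
    · exact (kb2 N L hL x₁ x₂ x₁ x₂).trans (le_of_eq (by ring))
    · exact (kb1 N L hL x₁ x₂ x₂).trans (le_of_eq (by ring))
    · exact (kb2 N L hL x₁ x₂ x₃ x₄).trans (le_of_eq (by ring))
    · exact (kb1 N L hL x₁ x₂ x₄).trans (le_of_eq (by ring))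
    · exact (kb1' N L hL x₂ x₁ x₂).trans (le_of_eq (by ring))
    · exact (kb0 N L hL x₂ x₂).trans (le_of_eq (by ring))
    · exact (kb1' N L hL x₂ x₃ x₄).trans (le_of_eq (by ring))
    · exact (kb0 N L hL x₂ x₄).trans (le_of_eq (by ring))
    · exact (kb2 N L hL x₃ x₄ x₁ x₂).trans (le_of_eq (by ring))
    · exact (kb1 N L hL x₃ x₄ x₂).trans (le_of_eq (by ring))
    · exact (kb2 N L hL x₃ x₄ x₃ x₄).trans (le_of_eq (by ring))
    · exact (kb1 N L hL x₃ x₄ x₄).trans (le_of_eq (by ring))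
    · exact (kb1' N L hL x₄ x₁ x₂).trans (le_of_eq (by ring))
    · exact (kb0 N L hL x₄ x₂).trans (le_of_eq (by ring))
    · exact (kb1' N L hL x₄ x₃ x₄).trans (le_of_eq (by ring))
    · exact (kb0 N L hL x₄ x₄).trans (le_of_eq (by ring))
end
end

section
/- (Existence of the Robinson cutoff.) For every L > 0 and every b with 0 < b < L/2, there exists a continuously differentiable function h : ℝ → ℝ such that: (1) h is even and 0 ≤ h ≤ 1; (2) h(x) = 0 for all |x| ≥ L/2 + b; (3) h(x) = 1 for all |x| ≤ L/2 − b; (4) h(L/2 − x)² + h(L/2 + x)² = 1 for all x ∈ [0, b]; (5) |h'(x)| ≤ 1/b for all x ∈ ℝ. -/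
open Real Set Filter

set_option linter.unusedSectionVars false
set_option linter.unusedVariables false


noncomputable def robPsi (b t : ℝ) : ℝ :=
  (3/2) * ((b - t)/b)^2 + ((Real.sqrt 2 - 3)/2) * ((b - t)/b)^3

noncomputable def robPsid (b t : ℝ) : ℝ :=
  -(1/b) * (3 * ((b - t)/b) + (3/2) * (Real.sqrt 2 - 3) * ((b - t)/b)^2)

noncomputable def robPhi (b t : ℝ) : ℝ := if b ≤ t then 0 else robPsi b t
noncomputable def robPhid (b t : ℝ) : ℝ := if b ≤ t then 0 else robPsid b t

lemma s2_lt : Real.sqrt 2 < 3/2 := by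
  nlinarith [Real.sq_sqrt (by norm_num : (0:ℝ) ≤ 2), Real.sqrt_nonneg 2]

lemma s2_gt : 1 < Real.sqrt 2 := by
  nlinarith [Real.sq_sqrt (by norm_num : (0:ℝ) ≤ 2), Real.sqrt_nonneg 2]

lemma robg_nonneg {u : ℝ} (h0 : 0 ≤ u) (h1 : u ≤ 1) :
    0 ≤ 3*u + (3/2)*(Real.sqrt 2 - 3)*u^2 := by
  nlinarith [s2_gt, sq_nonneg u, mul_nonneg h0 h0]

lemma robg_le_one {u : ℝ} (h0 : 0 ≤ u) (h1 : u ≤ 1) :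
    3*u + (3/2)*(Real.sqrt 2 - 3)*u^2 ≤ 1 := by
  nlinarith [s2_lt, sq_nonneg ((9 - 3*Real.sqrt 2)*u - 3), s2_gt]

lemma robp_nonneg {u : ℝ} (h0 : 0 ≤ u) (h1 : u ≤ 1) :
    0 ≤ (3/2)*u^2 + ((Real.sqrt 2 - 3)/2)*u^3 := by
  nlinarith [s2_gt, sq_nonneg u, mul_nonneg (mul_nonneg h0 h0) h0]

lemma robp_le {u : ℝ} (h0 : 0 ≤ u) (h1 : u ≤ 1) :
    (3/2)*u^2 + ((Real.sqrt 2 - 3)/2)*u^3 ≤ Real.sqrt 2 / 2 := by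
  nlinarith [s2_gt, mul_nonneg (mul_nonneg h0 h0) h0, sq_nonneg u,
    mul_nonneg (mul_nonneg h0 h0) (sub_nonneg.2 h1),
    mul_nonneg h0 (sub_nonneg.2 h1), mul_nonneg (sub_nonneg.2 h1) (sub_nonneg.2 h1)]




lemma robPsi_b (b : ℝ) : robPsi b b = 0 := by simp [robPsi]
lemma robPsid_b (b : ℝ) : robPsid b b = 0 := by simp [robPsid]

lemma robPhi_of_ge {b t : ℝ} (h : b ≤ t) : robPhi b t = 0 := if_pos h
lemma robPhid_of_ge {b t : ℝ} (h : b ≤ t) : robPhid b t = 0 := if_pos h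

lemma u_mem {b t : ℝ} (hb : 0 < b) (ht : 0 ≤ t) (ht' : t ≤ b) :
    0 ≤ (b - t)/b ∧ (b - t)/b ≤ 1 := by
  constructor
  · exact div_nonneg (by linarith) hb.le
  · rw [div_le_one hb]; linarith

lemma robPhi_nonneg {b t : ℝ} (hb : 0 < b) (ht : 0 ≤ t) : 0 ≤ robPhi b t := by
  unfold robPhi; split_ifs with h
  · exact le_rfl
  · have hu := u_mem hb ht (not_le.1 h).le
    exact robp_nonneg hu.1 hu.2

lemma robPhi_le {b t : ℝ} (hb : 0 < b) (ht : 0 ≤ t) : robPhi b t ≤ Real.sqrt 2 / 2 := by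
  unfold robPhi; split_ifs with h
  · positivity
  · have hu := u_mem hb ht (not_le.1 h).le
    exact robp_le hu.1 hu.2

lemma robPhi_sq_le {b t : ℝ} (hb : 0 < b) (ht : 0 ≤ t) : robPhi b t ^ 2 ≤ 1/2 := by
  have h1 := robPhi_nonneg hb ht
  have h2 := robPhi_le hb ht
  nlinarith [Real.sq_sqrt (by norm_num : (0:ℝ) ≤ 2)]

lemma robPhid_abs_le {b t : ℝ} (hb : 0 < b) (ht : 0 ≤ t) : |robPhid b t| ≤ 1/b := by
  unfold robPhid; split_ifs with h
  · simp; positivity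
  · have hu := u_mem hb ht (not_le.1 h).le
    unfold robPsid
    rw [abs_mul, abs_neg, abs_of_nonneg (by positivity : (0:ℝ) ≤ 1/b),
      abs_of_nonneg (robg_nonneg hu.1 hu.2)]
    have := robg_le_one hu.1 hu.2
    rw [mul_comm]
    apply mul_le_mul_of_nonneg_right this (by positivity) |>.trans
    simp

lemma robPhi_zero {b : ℝ} (hb : 0 < b) : robPhi b 0 = Real.sqrt 2 / 2 := by
  rw [robPhi, if_neg (not_le.2 hb), robPsi]
  rw [sub_zero, div_self hb.ne']
  ring




lemma robPsi_hasDeriv (b t : ℝ) : HasDerivAt (robPsi b) (robPsid b t) t := by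
  have hw : HasDerivAt (fun t : ℝ => (b - t)/b) (-1/b) t :=
    ((hasDerivAt_id t).const_sub b).div_const b
  have h2 := (hw.pow 2).const_mul (3/2 : ℝ)
  have h3 := (hw.pow 3).const_mul ((Real.sqrt 2 - 3)/2)
  have := h2.add h3
  refine this.congr_deriv ?_
  unfold robPsid
  ring

lemma robPsi_cont (b : ℝ) : Continuous (robPsi b) := by unfold robPsi; fun_prop
lemma robPsid_cont (b : ℝ) : Continuous (robPsid b) := by unfold robPsid; fun_prop

lemma robPhi_cont (b : ℝ) : Continuous (robPhi b) := by
  unfold robPhi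
  exact Continuous.if_le continuous_const (robPsi_cont b) continuous_const continuous_id
    (fun x hx => by rw [← hx, robPsi_b])

lemma robPhid_cont (b : ℝ) : Continuous (robPhid b) := by
  unfold robPhid
  exact Continuous.if_le continuous_const (robPsid_cont b) continuous_const continuous_id
    (fun x hx => by rw [← hx, robPsid_b])

lemma robPhi_hasDeriv (b t : ℝ) : HasDerivAt (robPhi b) (robPhid b t) t := by
  rcases lt_trichotomy t b with h | h | h
  · have he : robPhi b =ᶠ[nhds t] robPsi b := by
      filter_upwards [isOpen_Iio.mem_nhds (show t ∈ Iio b from h)] with y hy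
      exact if_neg (not_le.2 hy)
    rw [show robPhid b t = robPsid b t from if_neg (not_le.2 h)]
    exact (robPsi_hasDeriv b t).congr_of_eventuallyEq he
  · rw [h]
    rw [show robPhid b b = 0 from if_pos le_rfl]
    have hleft : HasDerivWithinAt (robPhi b) 0 (Iic b) b := by
      have := ((robPsi_hasDeriv b b).hasDerivWithinAt (s := Iic b))
      rw [robPsid_b] at this
      exact this.congr (fun y hy => by
        have hyb : y ≤ b := hy
        rcases eq_or_lt_of_le hyb with rfl | hy'
        · rw [robPhi, if_pos le_rfl, robPsi_b]
        · exact if_neg (not_le.2 hy'))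
        (by rw [robPhi, if_pos le_rfl, robPsi_b])
    have hright : HasDerivWithinAt (robPhi b) 0 (Ici b) b := by
      exact (hasDerivWithinAt_const b _ 0).congr
        (fun y hy => if_pos hy) (if_pos le_rfl)
    have := hleft.union hright
    rw [Iic_union_Ici] at this
    exact this.hasDerivAt (by simp)
  · have he : robPhi b =ᶠ[nhds t] (fun _ => 0) := by
      filter_upwards [isOpen_Ioi.mem_nhds (show t ∈ Ioi b from h)] with y hy
      exact if_pos (le_of_lt hy)
    rw [show robPhid b t = 0 from if_pos h.le]
    exact (hasDerivAt_const t 0).congr_of_eventuallyEq he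






noncomputable def robDp (b c x : ℝ) : ℝ :=
  if x ≤ c then robPhi b (c - x) * robPhid b (c - x) / Real.sqrt (1 - robPhi b (c - x)^2)
  else robPhid b (x - c)

noncomputable def robH (b c x : ℝ) : ℝ :=
  if |x| ≤ c then Real.sqrt (1 - robPhi b (c - |x|)^2) else robPhi b (|x| - c)

noncomputable def robD (b c x : ℝ) : ℝ := if x < 0 then -(robDp b c (-x)) else robDp b c x

lemma robSqrtHalf : Real.sqrt (1 - (Real.sqrt 2/2)^2) = Real.sqrt 2 / 2 := by
  have h1 : (Real.sqrt 2/2)^2 = 1/2 := by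
    rw [div_pow, Real.sq_sqrt (by norm_num : (0:ℝ) ≤ 2)]; norm_num
  rw [h1, show (1:ℝ) - 1/2 = (Real.sqrt 2/2)^2 by rw [h1]; norm_num,
    Real.sqrt_sq (by positivity)]

section main
variable {b c : ℝ} (hb : 0 < b) (hbc : b < c)
include hb

omit hb in
lemma robH_even (b c x : ℝ) : robH b c (-x) = robH b c x := by simp [robH, abs_neg]

lemma robH_one {x : ℝ} (hx : |x| ≤ c - b) : robH b c x = 1 := by
  rw [robH, if_pos (by linarith), robPhi_of_ge (by linarith)]
  simp

lemma robH_zero {x : ℝ} (hx : c + b ≤ |x|) : robH b c x = 0 := by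
  have h0 : 0 ≤ |x| := abs_nonneg x
  rw [robH, if_neg (by push_neg; linarith), robPhi_of_ge (by linarith)]

include hbc

lemma robH_mem {x : ℝ} : 0 ≤ robH b c x ∧ robH b c x ≤ 1 := by
  have h0 : 0 ≤ |x| := abs_nonneg x
  rw [robH]; split_ifs with h1
  · refine ⟨Real.sqrt_nonneg _, Real.sqrt_le_one.mpr ?_⟩
    nlinarith [sq_nonneg (robPhi b (c - |x|))]
  · have ht : 0 ≤ |x| - c := by push_neg at h1; linarith
    refine ⟨robPhi_nonneg hb ht, (robPhi_le hb ht).trans ?_⟩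
    nlinarith [Real.sq_sqrt (by norm_num : (0:ℝ) ≤ 2), Real.sqrt_nonneg 2]

lemma robH_left {x : ℝ} (hx0 : 0 ≤ x) (hxb : x ≤ b) :
    robH b c (c - x) = Real.sqrt (1 - robPhi b x ^ 2) := by
  have habs : |c - x| = c - x := abs_of_nonneg (by linarith)
  rw [robH, habs, if_pos (by linarith)]
  congr 3
  ring

lemma robH_right {x : ℝ} (hx0 : 0 ≤ x) (hxb : x ≤ b) :
    robH b c (c + x) = robPhi b x := by
  have habs : |c + x| = c + x := abs_of_nonneg (by linarith)
  rcases eq_or_lt_of_le hx0 with rfl | hx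
  · rw [robH, habs, add_zero, if_pos le_rfl, sub_self, robPhi_zero hb, robSqrtHalf]
  · rw [robH, habs, if_neg (by linarith), add_sub_cancel_left]

lemma robS_hasDeriv {x : ℝ} (hx : x ≤ c) :
    HasDerivAt (fun y => Real.sqrt (1 - robPhi b (c - y)^2))
      (robPhi b (c - x) * robPhid b (c - x) / Real.sqrt (1 - robPhi b (c - x)^2)) x := by
  have hw : HasDerivAt (fun y : ℝ => c - y) (-1) x := (hasDerivAt_id x).const_sub c
  have hphi : HasDerivAt (fun y : ℝ => robPhi b (c - y)) (robPhid b (c - x) * -1) x := by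
    exact (robPhi_hasDeriv b (c - x)).comp x hw
  have hsq := hphi.pow 2
  have hin := hsq.const_sub 1
  have hpos : (0:ℝ) < 1 - robPhi b (c - x)^2 := by
    nlinarith [robPhi_sq_le hb (show (0:ℝ) ≤ c - x by linarith)]
  have hs := hin.sqrt hpos.ne'
  refine hs.congr_deriv ?_
  simp only [Pi.pow_apply]
  have hsne : Real.sqrt (1 - robPhi b (c - x)^2) ≠ 0 := (Real.sqrt_pos.2 hpos).ne'
  field_simp
  ring

lemma robT_hasDeriv (x : ℝ) :
    HasDerivAt (fun y => robPhi b (y - c)) (robPhid b (x - c)) x := by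
  have hw : HasDerivAt (fun y : ℝ => y - c) (1:ℝ) x := (hasDerivAt_id x).sub_const c
  exact ((robPhi_hasDeriv b (x - c)).comp x hw).congr_deriv (mul_one _)

lemma robDp_val_c : robPhi b 0 * robPhid b 0 / Real.sqrt (1 - robPhi b 0 ^ 2) = robPhid b 0 := by
  rw [robPhi_zero hb, robSqrtHalf]
  have : Real.sqrt 2 / 2 ≠ 0 := by positivity
  field_simp

lemma robH_hasDeriv_pos {x : ℝ} (hx : 0 < x) :
    HasDerivAt (robH b c) (robDp b c x) x := by
  have hc0 : 0 < c := hb.trans hbc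
  rcases lt_trichotomy x c with h | h | h
  · rw [robDp, if_pos h.le]
    refine (robS_hasDeriv hb hbc h.le).congr_of_eventuallyEq ?_
    filter_upwards [isOpen_Ioo.mem_nhds (show x ∈ Ioo 0 c from ⟨hx, h⟩)] with y hy
    rw [robH, abs_of_pos hy.1, if_pos hy.2.le]
  · rw [h]
    rw [robDp, if_pos le_rfl, sub_self, robDp_val_c hb hbc]
    have hleft : HasDerivWithinAt (robH b c) (robPhid b 0) (Iic c) c := by
      have hS := (robS_hasDeriv hb hbc (le_refl c)).hasDerivWithinAt (s := Iic c)
      rw [sub_self, robDp_val_c hb hbc] at hS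
      refine hS.congr_of_eventuallyEq ?_ (by rw [robH, abs_of_pos hc0, if_pos le_rfl])
      filter_upwards [inter_mem_nhdsWithin (Iic c) (isOpen_Ioi.mem_nhds (show c ∈ Ioi (0:ℝ) from hc0))]
        with y hy
      rw [robH, abs_of_pos hy.2, if_pos (show y ≤ c from hy.1)]
    have hright : HasDerivWithinAt (robH b c) (robPhid b 0) (Ici c) c := by
      have hT := (robT_hasDeriv hb hbc c).hasDerivWithinAt (s := Ici c)
      rw [sub_self] at hT
      refine hT.congr (fun y hy => ?_)
        (by rw [robH, abs_of_pos hc0, if_pos le_rfl, sub_self, robPhi_zero hb, robSqrtHalf])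
      have hyc : c ≤ y := hy
      rcases eq_or_lt_of_le hyc with rfl | h'
      · rw [robH, abs_of_pos hc0, if_pos le_rfl, sub_self, robPhi_zero hb, robSqrtHalf]
      · rw [robH, abs_of_pos (hc0.trans h'), if_neg (not_le.2 h')]
    have := hleft.union hright
    rw [Iic_union_Ici] at this
    exact this.hasDerivAt (by simp)
  · rw [robDp, if_neg (not_le.2 h)]
    refine (robT_hasDeriv hb hbc x).congr_of_eventuallyEq ?_
    filter_upwards [isOpen_Ioi.mem_nhds (show x ∈ Ioi c from h)] with y hy
    have : 0 < y := hc0.trans hy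
    rw [robH, abs_of_pos this, if_neg (not_le.2 hy)]

lemma robH_hasDeriv (x : ℝ) : HasDerivAt (robH b c) (robD b c x) x := by
  have hc0 : 0 < c := hb.trans hbc
  rcases lt_trichotomy x 0 with hx | rfl | hx
  · rw [robD, if_pos hx]
    have hp := robH_hasDeriv_pos hb hbc (show 0 < -x by linarith)
    have hn : HasDerivAt (fun y : ℝ => -y) (-1) x := by exact (hasDerivAt_id' x).neg
    have hcomp := hp.comp x hn
    have heq : (robH b c ∘ fun y : ℝ => -y) = robH b c := funext fun y => robH_even b c y
    rw [heq] at hcomp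
    refine hcomp.congr_deriv ?_
    ring
  · rw [robD, if_neg (lt_irrefl 0), robDp, if_pos hc0.le, sub_zero, robPhi_of_ge hbc.le]
    simp only [zero_mul, zero_div]
    refine (hasDerivAt_const (0:ℝ) (1:ℝ)).congr_of_eventuallyEq ?_
    filter_upwards [isOpen_Ioo.mem_nhds
      (show (0:ℝ) ∈ Ioo (-(c-b)) (c-b) from ⟨by linarith, by linarith⟩)] with y hy
    exact robH_one hb (abs_lt.mpr ⟨by linarith [hy.1], hy.2⟩).le
  · rw [robD, if_neg (not_lt.2 hx.le)]
    exact robH_hasDeriv_pos hb hbc hx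

lemma robDp_contAt {x : ℝ} (hx : 0 < x) : ContinuousAt (robDp b c) x := by
  have hc0 : 0 < c := hb.trans hbc
  have hcont1 : Continuous fun y : ℝ => robPhi b (c - y) :=
    (robPhi_cont b).comp (continuous_const.sub continuous_id)
  have hcont2 : Continuous fun y : ℝ => robPhid b (c - y) :=
    (robPhid_cont b).comp (continuous_const.sub continuous_id)
  have hcontT : Continuous fun y : ℝ => robPhid b (y - c) :=
    (robPhid_cont b).comp (continuous_id.sub continuous_const)
  have hSc : ∀ z : ℝ, z ≤ c → ContinuousAt
      (fun y => robPhi b (c - y) * robPhid b (c - y) / Real.sqrt (1 - robPhi b (c - y)^2)) z := by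
    intro z hz
    have hpos : (0:ℝ) < 1 - robPhi b (c - z)^2 := by
      nlinarith [robPhi_sq_le hb (show (0:ℝ) ≤ c - z by linarith)]
    refine ContinuousAt.div (hcont1.continuousAt.mul hcont2.continuousAt)
      (Real.continuous_sqrt.continuousAt.comp
        ((continuous_const.sub (hcont1.pow 2)).continuousAt)) ?_
    exact (Real.sqrt_pos.2 hpos).ne'
  rcases lt_trichotomy x c with h | h | h
  · refine (hSc x h.le).congr ?_
    filter_upwards [isOpen_Iio.mem_nhds (show x ∈ Iio c from h)] with y hy
    rw [robDp, if_pos hy.le]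
  · rw [h]
    have hval : robDp b c c = robPhid b 0 := by
      rw [robDp, if_pos le_rfl, sub_self, robDp_val_c hb hbc]
    have hleft : ContinuousWithinAt (robDp b c) (Iic c) c := by
      refine ((hSc c le_rfl).continuousWithinAt).congr
        (fun y hy => by rw [robDp, if_pos (show y ≤ c from hy)]) ?_
      rw [robDp, if_pos le_rfl]
    have hright : ContinuousWithinAt (robDp b c) (Ioi c) c := by
      refine (hcontT.continuousAt.continuousWithinAt).congr
        (fun y hy => by rw [robDp, if_neg (not_le.2 (show c < y from hy))]) ?_
      rw [hval, sub_self]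
    have hu := hleft.union hright
    rw [Iic_union_Ioi] at hu
    exact (continuousWithinAt_univ _ _).mp hu
  · refine (hcontT.continuousAt).congr ?_
    filter_upwards [isOpen_Ioi.mem_nhds (show x ∈ Ioi c from h)] with y hy
    rw [robDp, if_neg (not_le.2 hy)]

lemma robD_cont : Continuous (robD b c) := by
  have hc0 : 0 < c := hb.trans hbc
  rw [continuous_iff_continuousAt]
  intro x
  rcases lt_trichotomy x 0 with hx | rfl | hx
  · have hn : ContinuousAt (fun y : ℝ => -(robDp b c (-y))) x :=
      (((robDp_contAt hb hbc (show 0 < -x by linarith)).comp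
        (continuous_neg.continuousAt))).neg
    refine hn.congr ?_
    filter_upwards [isOpen_Iio.mem_nhds (show x ∈ Iio 0 from hx)] with y hy
    rw [robD, if_pos (show y < 0 from hy)]
  · have h0 : ∀ y : ℝ, |y| < c - b → robD b c y = 0 := by
      intro y hy
      have h1 : -y ≤ |y| := neg_le_abs y
      have h2 : y ≤ |y| := le_abs_self y
      rw [robD]
      split_ifs with h
      · rw [robDp, if_pos (by linarith), robPhi_of_ge (by linarith : b ≤ c - -y)]
        simp
      · rw [robDp, if_pos (by linarith), robPhi_of_ge (by linarith : b ≤ c - y)]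
        simp
    refine (continuousAt_const (y := (0:ℝ))).congr ?_
    filter_upwards [isOpen_Ioo.mem_nhds
      (show (0:ℝ) ∈ Ioo (-(c-b)) (c-b) from ⟨by linarith, by linarith⟩)] with y hy
    exact (h0 y (abs_lt.mpr ⟨by linarith [hy.1], hy.2⟩)).symm
  · refine (robDp_contAt hb hbc hx).congr ?_
    filter_upwards [isOpen_Ioi.mem_nhds (show x ∈ Ioi 0 from hx)] with y hy
    rw [robD, if_neg (not_lt.2 hy.le)]

lemma robDp_bound {x : ℝ} (hx : 0 ≤ x) : |robDp b c x| ≤ 1/b := by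
  rw [robDp]
  split_ifs with h
  · have ht0 : (0:ℝ) ≤ c - x := by linarith
    have h1 := robPhi_nonneg hb ht0
    have h2 := robPhi_sq_le hb ht0
    have h3 := robPhid_abs_le hb ht0
    have hpos : (0:ℝ) < 1 - robPhi b (c - x)^2 := by nlinarith
    have hsp : 0 < Real.sqrt (1 - robPhi b (c - x) ^ 2) := Real.sqrt_pos.2 hpos
    have hphile : robPhi b (c - x) ≤ Real.sqrt (1 - robPhi b (c - x)^2) :=
      (Real.le_sqrt h1 hpos.le).mpr (by nlinarith)
    rw [abs_div, abs_of_pos hsp, div_le_iff₀ hsp, abs_mul]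
    calc |robPhi b (c - x)| * |robPhid b (c - x)|
        ≤ Real.sqrt (1 - robPhi b (c - x)^2) * (1/b) :=
          mul_le_mul (by rwa [abs_of_nonneg h1]) h3 (abs_nonneg _) (Real.sqrt_nonneg _)
      _ = 1/b * Real.sqrt (1 - robPhi b (c - x)^2) := mul_comm _ _
  · push_neg at h
    exact robPhid_abs_le hb (by linarith)

lemma robD_bound (x : ℝ) : |robD b c x| ≤ 1/b := by
  rw [robD]
  split_ifs with h
  · rw [abs_neg]
    exact robDp_bound hb hbc (by linarith)
  · push_neg at h
    exact robDp_bound hb hbc h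

end main

/-- Existence of the Robinson cutoff function. -/
theorem statement_17 (L b : ℝ) (hL : 0 < L) (hb : 0 < b) (hbL : b < L / 2) :
    ∃ h : ℝ → ℝ,
      ContDiff ℝ 1 h ∧
      (∀ x, h (-x) = h x) ∧
      (∀ x, 0 ≤ h x ∧ h x ≤ 1) ∧
      (∀ x, L / 2 + b ≤ |x| → h x = 0) ∧
      (∀ x, |x| ≤ L / 2 - b → h x = 1) ∧
      (∀ x ∈ Set.Icc (0 : ℝ) b, (h (L / 2 - x)) ^ 2 + (h (L / 2 + x)) ^ 2 = 1) ∧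
      (∀ x, |deriv h x| ≤ 1 / b) := by
  have hbc : b < L / 2 := hbL
  have hder := fun x => robH_hasDeriv hb hbc x
  have hderiv : deriv (robH b (L/2)) = robD b (L/2) := funext fun x => (hder x).deriv
  refine ⟨robH b (L/2), ?_, fun x => robH_even b (L/2) x,
    fun x => robH_mem (x := x) hb hbc, fun x hx => robH_zero hb hx,
    fun x hx => robH_one hb hx, fun x hx => ?_, fun x => ?_⟩
  · refine contDiff_one_iff_deriv.mpr ⟨fun x => (hder x).differentiableAt, ?_⟩
    rw [hderiv]
    exact robD_cont hb hbc
  · rw [robH_left hb hbc hx.1 hx.2, robH_right hb hbc hx.1 hx.2,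
      Real.sq_sqrt (by nlinarith [robPhi_sq_le hb hx.1] : (0:ℝ) ≤ 1 - robPhi b x ^ 2)]
    ring
  · rw [hderiv]
    exact robD_bound hb hbc x
end
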